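/- arXiv:2102.09851 — 2 statements merged into one kernel-verified Lean document; each statement's English description precedes it below -/
import Mathlib

section
/- Fix reals b, σ with σ ≠ 0, d > 0 and T ≥ 2d. Let ξ = (ξ₁, ξ₂, ξ₃) be a continuous solution of the first-slice integral system on the full slice [T−2d, T−d] × [−d, 0]². Then: (i) for every t ∈ [T−2d, T−d] and every x ∈ [t, T−d], ξ₃(x, t−x, 0) ≥ 0; (ii) for every t ∈ [T−2d, T−d], b·ξ₂(t, 0) ≥ 0 and |ξ₂(t, 0)| ≤ |b|. -/
open Set MeasureTheory intervalIntegral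

/-- The first-slice integral system on the full slice `[T-2d, T-d] × [-d,0]²`. -/
def isSolutionSlice (b σ T d : ℝ) (ξ₁ : ℝ → ℝ) (ξ₂ : ℝ → ℝ → ℝ) (ξ₃ : ℝ → ℝ → ℝ → ℝ) : Prop :=
  ∀ t ∈ Icc (T - 2 * d) (T - d), ∀ s ∈ Icc (-d) 0, ∀ r ∈ Icc (-d) 0,
    ξ₁ t = 1 - (σ ^ 2)⁻¹ * ∫ x in t..(T - d), (ξ₂ x 0) ^ 2 ∧
    ξ₂ t s = b * ξ₁ (min (T - d) (t + s + d)) -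
      (σ ^ 2)⁻¹ * ∫ x in t..(min (T - d) (t + s + d)), ξ₂ x 0 * ξ₃ x (t + s - x) 0 ∧
    ξ₃ t s r = b * ξ₂ (min (T - d) (t + min s r + d)) (|s - r| - d) -
      (σ ^ 2)⁻¹ * ∫ x in t..(min (T - d) (t + min s r + d)),
        ξ₃ x (t + s - x) 0 * ξ₃ x 0 (t + r - x)


lemma gronwall_zero {a e C K : ℝ} {D : ℝ → ℝ}
    (hae : a ≤ e) (hK : 0 ≤ K) (hC : 0 ≤ C)
    (hD0 : ∀ x ∈ Icc a e, 0 ≤ D x)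
    (hDC : ∀ x ∈ Icc a e, D x ≤ C)
    (hint : ∀ x ∈ Icc a e, IntervalIntegrable D MeasureTheory.volume x e)
    (hineq : ∀ x ∈ Icc a e, D x ≤ K * ∫ y in x..e, D y) :
    ∀ x ∈ Icc a e, D x = 0 := by
  have key : ∀ n : ℕ, ∀ x ∈ Icc a e, D x ≤ C * (K ^ n * (e - x) ^ n / n.factorial) := by
    intro n
    induction n with
    | zero => intro x hx; simpa using hDC x hx
    | succ n ih =>
      intro x hx
      have hxe : x ≤ e := hx.2
      have h1 : D x ≤ K * ∫ y in x..e, D y := hineq x hx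
      have h2 : (∫ y in x..e, D y) ≤ ∫ y in x..e, C * (K ^ n * (e - y) ^ n / n.factorial) := by
        apply intervalIntegral.integral_mono_on hxe (hint x hx)
        · apply Continuous.intervalIntegrable; continuity
        · intro y hy
          exact ih y ⟨le_trans hx.1 hy.1, hy.2⟩
      have h3 : (∫ y in x..e, C * (K ^ n * (e - y) ^ n / n.factorial))
          = C * (K ^ n / n.factorial) * ((e - x) ^ (n + 1) / (n + 1)) := by
        have : (∫ y in x..e, C * (K ^ n * (e - y) ^ n / n.factorial))
            = (C * (K ^ n / n.factorial)) * ∫ y in x..e, (e - y) ^ n := by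
          rw [← intervalIntegral.integral_const_mul]
          congr 1; funext y; ring
        rw [this, intervalIntegral.integral_comp_sub_left (fun u => u ^ n) e]
        rw [integral_pow]
        simp [sub_self]
      have h4 : K * ∫ y in x..e, D y ≤ C * (K ^ (n+1) * (e - x) ^ (n+1) / (n+1).factorial) := by
      -- K * ∫ ≤ K * (C * (K^n/n!) * ((e-x)^{n+1}/(n+1)))
        have := mul_le_mul_of_nonneg_left h2 hK
        rw [h3] at this
        refine this.trans (le_of_eq ?_)
        rw [Nat.factorial_succ]
        push_cast
        have hfac : (0:ℝ) < n.factorial := by positivity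
        field_simp
        ring
      exact h1.trans h4
  intro x hx
  have hx0 : 0 ≤ D x := hD0 x hx
  have hlim : Filter.Tendsto (fun n : ℕ => C * ((K * (e - x)) ^ n / n.factorial))
      Filter.atTop (nhds 0) := by
    have := (FloorSemiring.tendsto_pow_div_factorial_atTop (K := ℝ) (K * (e - x))).const_mul C
    simpa using this
  have hub : D x ≤ 0 := by
    refine ge_of_tendsto' hlim fun n => ?_
    have := key n x hx
    calc D x ≤ C * (K ^ n * (e - x) ^ n / n.factorial) := this
      _ = C * ((K * (e - x)) ^ n / n.factorial) := by rw [mul_pow]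
  linarith

private def triSet (a e x : ℝ) : Set (ℝ × ℝ) := {q | a ≤ q.1 ∧ q.1 ≤ q.2 ∧ q.2 ≤ e ∧ x ≤ q.2}

private def errF (g h : ℝ → ℝ → ℝ) (p P G : ℝ → ℝ) : ℝ × ℝ → ℝ := fun q =>
  max (max |g q.1 q.2 - G q.2| |h q.1 q.2 - G q.2|) |p q.2 - P q.2|

private noncomputable def errD (a e : ℝ) (g h : ℝ → ℝ → ℝ) (p P G : ℝ → ℝ) : ℝ → ℝ := fun x =>
  sSup (errF g h p P G '' triSet a e x)

lemma volterra_eq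
    {a e κ M : ℝ} {g h : ℝ → ℝ → ℝ} {p P G : ℝ → ℝ}
    (hae : a ≤ e) (hκ : 0 ≤ κ)
    (hgc : ContinuousOn (fun q : ℝ × ℝ => g q.1 q.2) {q : ℝ × ℝ | a ≤ q.1 ∧ q.1 ≤ q.2 ∧ q.2 ≤ e})
    (hhc : ContinuousOn (fun q : ℝ × ℝ => h q.1 q.2) {q : ℝ × ℝ | a ≤ q.1 ∧ q.1 ≤ q.2 ∧ q.2 ≤ e})
    (hpc : ContinuousOn p (Icc a e)) (hPc : ContinuousOn P (Icc a e))
    (hGc : ContinuousOn G (Icc a e))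
    (hM : ∀ u y, a ≤ u → u ≤ y → y ≤ e →
      |g u y| ≤ M ∧ |h u y| ≤ M ∧ |p y| ≤ M ∧ |P y| ≤ M ∧ |G y| ≤ M)
    (hg : ∀ u y, a ≤ u → u ≤ y → y ≤ e →
      g u y - G y = -κ * ∫ z in y..e, (g u z * h y z - G z * G z))
    (hh : ∀ u y, a ≤ u → u ≤ y → y ≤ e →
      h u y - G y = -κ * ∫ z in y..e, (g y z * h u z - G z * G z))
    (hp : ∀ y, a ≤ y → y ≤ e →
      p y - P y = -κ * ∫ z in y..e, (p z * g y z - P z * G z)) :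
    ∀ u y, a ≤ u → u ≤ y → y ≤ e → g u y = G y ∧ h u y = G y ∧ p y = P y := by
  set F := errF g h p P G with hFdef
  set D := errD a e g h p P G with hDdef
  have hM0 : 0 ≤ M := le_trans (abs_nonneg _) (hM e e hae le_rfl le_rfl).1
  have hF2M : ∀ q, q ∈ triSet a e a → F q ≤ 2 * M := by
    rintro ⟨u, y⟩ ⟨hau, huy, hye, -⟩
    obtain ⟨b1, b2, b3, b4, b5⟩ := hM u y hau huy hye
    simp only [hFdef, errF]
    exact max_le (max_le ((abs_sub _ _).trans (by linarith))
      ((abs_sub _ _).trans (by linarith))) ((abs_sub _ _).trans (by linarith))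
  have hsub : ∀ x, triSet a e x ⊆ triSet a e a := by
    rintro x ⟨u, y⟩ ⟨h1, h2, h3, h4⟩; exact ⟨h1, h2, h3, h1.trans h2⟩
  have hbdd : ∀ x, BddAbove (F '' triSet a e x) := by
    intro x
    exact ⟨2 * M, by rintro v ⟨q, hq, rfl⟩; exact hF2M q (hsub x hq)⟩
  have hne : ∀ x, x ≤ e → (e, e) ∈ triSet a e x := fun x hx => ⟨hae, le_rfl, le_rfl, hx⟩
  have hFD : ∀ x q, q ∈ triSet a e x → F q ≤ D x := fun x q hq =>
    le_csSup (hbdd x) (mem_image_of_mem _ hq)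
  have hF0 : ∀ q, 0 ≤ F q := fun q =>
    le_trans (abs_nonneg _) (le_max_right _ _)
  have hD0 : ∀ x, x ≤ e → 0 ≤ D x := fun x hx =>
    le_trans (hF0 (e, e)) (hFD x (e, e) (hne x hx))
  have hDC : ∀ x, x ≤ e → D x ≤ 2 * M := fun x hx =>
    csSup_le ⟨F (e, e), mem_image_of_mem _ (hne x hx)⟩
      (by rintro v ⟨q, hq, rfl⟩; exact hF2M q (hsub x hq))
  have hanti : AntitoneOn D (Icc a e) := by
    intro x1 h1 x2 h2 h12
    refine csSup_le_csSup (hbdd x1) ⟨F (e, e), mem_image_of_mem _ (hne x2 h2.2)⟩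
      (image_mono ?_)
    rintro ⟨u, y⟩ ⟨k1, k2, k3, k4⟩; exact ⟨k1, k2, k3, h12.trans k4⟩
  have hDint : ∀ x ∈ Icc a e, IntervalIntegrable D MeasureTheory.volume x e := by
    intro x hx
    apply AntitoneOn.intervalIntegrable
    rw [uIcc_of_le hx.2]
    exact hanti.mono (Icc_subset_Icc hx.1 le_rfl)
  -- the core integral estimate
  have inner : ∀ x ∈ Icc a e, ∀ y, a ≤ y → x ≤ y → y ≤ e →
      ∀ f1 f2 w1 w2 : ℝ → ℝ, ContinuousOn f1 (Icc y e) → ContinuousOn f2 (Icc y e) →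
      ContinuousOn w1 (Icc y e) → ContinuousOn w2 (Icc y e) →
      (∀ z, y ≤ z → z ≤ e → |f1 z| ≤ M ∧ |w2 z| ≤ M ∧ |f2 z - w2 z| ≤ D z ∧ |f1 z - w1 z| ≤ D z) →
      |(-κ) * ∫ z in y..e, (f1 z * f2 z - w1 z * w2 z)| ≤ κ * (2 * M) * ∫ z in x..e, D z := by
    intro x hx y hay hxy hye f1 f2 w1 w2 c1 c2 c3 c4 hbd
    have hDiy : IntervalIntegrable D MeasureTheory.volume y e := hDint y ⟨hay, hye⟩
    have hcont : ContinuousOn (fun z => f1 z * f2 z - w1 z * w2 z) (Icc y e) :=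
      (c1.mul c2).sub (c3.mul c4)
    have int1 : IntervalIntegrable (fun z => |f1 z * f2 z - w1 z * w2 z|)
        MeasureTheory.volume y e := by
      apply ContinuousOn.intervalIntegrable
      rw [uIcc_of_le hye]; exact hcont.abs
    have intxy : IntervalIntegrable D MeasureTheory.volume x y :=
      (hDint x hx).mono_set (by rw [uIcc_of_le hxy, uIcc_of_le hx.2]; exact Icc_subset_Icc le_rfl hye)
    calc |(-κ) * ∫ z in y..e, (f1 z * f2 z - w1 z * w2 z)|
        = κ * |∫ z in y..e, (f1 z * f2 z - w1 z * w2 z)| := by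
          rw [abs_mul, abs_neg, abs_of_nonneg hκ]
      _ ≤ κ * ∫ z in y..e, |f1 z * f2 z - w1 z * w2 z| :=
          mul_le_mul_of_nonneg_left (intervalIntegral.abs_integral_le_integral_abs hye) hκ
      _ ≤ κ * ∫ z in y..e, (2 * M) * D z := by
          refine mul_le_mul_of_nonneg_left
            (intervalIntegral.integral_mono_on hye int1 (hDiy.const_mul _) ?_) hκ
          intro z hz
          obtain ⟨b1, b2, b3, b4⟩ := hbd z hz.1 hz.2
          have hDz : 0 ≤ D z := hD0 z hz.2
          calc |f1 z * f2 z - w1 z * w2 z|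
              = |f1 z * (f2 z - w2 z) + (f1 z - w1 z) * w2 z| := by congr 1; ring
            _ ≤ |f1 z| * |f2 z - w2 z| + |f1 z - w1 z| * |w2 z| := by
                refine (abs_add_le _ _).trans ?_
                rw [abs_mul, abs_mul]
            _ ≤ M * D z + D z * M :=
                add_le_add (mul_le_mul b1 b3 (abs_nonneg _) hM0)
                  (mul_le_mul b4 b2 (abs_nonneg _) hDz)
            _ = 2 * M * D z := by ring
      _ = κ * ((2 * M) * ∫ z in y..e, D z) := by rw [intervalIntegral.integral_const_mul]
      _ ≤ κ * ((2 * M) * ∫ z in x..e, D z) := by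
          have hsplit : (∫ z in x..e, D z) = (∫ z in x..y, D z) + ∫ z in y..e, D z :=
            (intervalIntegral.integral_add_adjacent_intervals intxy hDiy).symm
          have hpos : 0 ≤ ∫ z in x..y, D z :=
            intervalIntegral.integral_nonneg hxy (fun z hz => hD0 z (hz.2.trans hye))
          have h1 : (∫ z in y..e, D z) ≤ ∫ z in x..e, D z := by rw [hsplit]; linarith
          have h2M : (0:ℝ) ≤ 2 * M := by linarith
          exact mul_le_mul_of_nonneg_left (mul_le_mul_of_nonneg_left h1 h2M) hκ
      _ = κ * (2 * M) * ∫ z in x..e, D z := by ring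
  -- continuity of traces
  have trg : ∀ u y, a ≤ u → u ≤ y → ContinuousOn (fun z => g u z) (Icc y e) := by
    intro u y hau huy
    refine hgc.comp (Continuous.continuousOn (Continuous.prodMk_right u)) ?_
    intro z hz; exact ⟨hau, huy.trans hz.1, hz.2⟩
  have trh : ∀ u y, a ≤ u → u ≤ y → ContinuousOn (fun z => h u z) (Icc y e) := by
    intro u y hau huy
    refine hhc.comp (Continuous.continuousOn (Continuous.prodMk_right u)) ?_
    intro z hz; exact ⟨hau, huy.trans hz.1, hz.2⟩
  have est : ∀ x ∈ Icc a e, ∀ q ∈ triSet a e x, F q ≤ κ * (2 * M) * ∫ z in x..e, D z := by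
    rintro x hx ⟨u, y⟩ ⟨hau, huy, hye, hxy⟩
    have hay : a ≤ y := hau.trans huy
    have hmono : Icc y e ⊆ Icc a e := Icc_subset_Icc hay le_rfl
    simp only [hFdef, errF]
    refine max_le (max_le ?_ ?_) ?_
    · rw [show |g u y - G y| = |(-κ) * ∫ z in y..e, (g u z * h y z - G z * G z)| by
        rw [hg u y hau huy hye]]
      refine inner x hx y hay hxy hye _ _ _ _ (trg u y hau huy) (trh y y hay le_rfl)
        (hGc.mono hmono) (hGc.mono hmono) ?_
      intro z hz1 hz2
      have huz : u ≤ z := huy.trans hz1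
      refine ⟨(hM u z hau huz hz2).1, (hM u z hau huz hz2).2.2.2.2, ?_, ?_⟩
      · exact le_trans (le_trans (le_max_right _ _) (le_max_left _ _))
          (hFD z (y, z) ⟨hay, hz1, hz2, le_rfl⟩)
      · exact le_trans (le_trans (le_max_left _ _) (le_max_left _ _))
          (hFD z (u, z) ⟨hau, huz, hz2, le_rfl⟩)
    · rw [show |h u y - G y| = |(-κ) * ∫ z in y..e, (g y z * h u z - G z * G z)| by
        rw [hh u y hau huy hye]]
      refine inner x hx y hay hxy hye _ _ _ _ (trg y y hay le_rfl) (trh u y hau huy)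
        (hGc.mono hmono) (hGc.mono hmono) ?_
      intro z hz1 hz2
      have huz : u ≤ z := huy.trans hz1
      refine ⟨(hM y z hay hz1 hz2).1, (hM y z hay hz1 hz2).2.2.2.2, ?_, ?_⟩
      · exact le_trans (le_trans (le_max_right _ _) (le_max_left _ _))
          (hFD z (u, z) ⟨hau, huz, hz2, le_rfl⟩)
      · exact le_trans (le_trans (le_max_left _ _) (le_max_left _ _))
          (hFD z (y, z) ⟨hay, hz1, hz2, le_rfl⟩)
    · rw [show |p y - P y| = |(-κ) * ∫ z in y..e, (p z * g y z - P z * G z)| by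
        rw [hp y hay hye]]
      refine inner x hx y hay hxy hye _ _ _ _ (hpc.mono hmono) (trg y y hay le_rfl)
        (hPc.mono hmono) (hGc.mono hmono) ?_
      intro z hz1 hz2
      refine ⟨(hM y z hay hz1 hz2).2.2.1, (hM y z hay hz1 hz2).2.2.2.2, ?_, ?_⟩
      · exact le_trans (le_trans (le_max_left _ _) (le_max_left _ _))
          (hFD z (y, z) ⟨hay, hz1, hz2, le_rfl⟩)
      · exact le_trans (le_max_right _ _) (hFD z (y, z) ⟨hay, hz1, hz2, le_rfl⟩)
  have hineq : ∀ x ∈ Icc a e, D x ≤ κ * (2 * M) * ∫ z in x..e, D z := by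
    intro x hx
    refine csSup_le ⟨F (e, e), mem_image_of_mem _ (hne x hx.2)⟩ ?_
    rintro v ⟨q, hq, rfl⟩
    exact est x hx q hq
  have hDzero : ∀ x ∈ Icc a e, D x = 0 :=
    gronwall_zero hae (by positivity) (by linarith : (0:ℝ) ≤ 2*M)
      (fun x hx => hD0 x hx.2) (fun x hx => hDC x hx.2) hDint hineq
  intro u y hau huy hye
  have hay : a ≤ y := hau.trans huy
  have hq : (u, y) ∈ triSet a e y := ⟨hau, huy, hye, le_rfl⟩
  have hF : F (u, y) ≤ 0 := by
    have := hFD y (u, y) hq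
    rwa [hDzero y ⟨hay, hye⟩] at this
  simp only [hFdef, errF, max_le_iff] at hF
  obtain ⟨⟨e1, e2⟩, e3⟩ := hF
  exact ⟨sub_eq_zero.mp (abs_nonpos_iff.mp e1), sub_eq_zero.mp (abs_nonpos_iff.mp e2),
    sub_eq_zero.mp (abs_nonpos_iff.mp e3)⟩

set_option maxHeartbeats 1000000

/-- For a continuous solution of the first-slice integral system:
(i) `ξ₃(x, t-x, 0) ≥ 0` for `t ∈ [T-2d, T-d]` and `x ∈ [t, T-d]`;
(ii) `b·ξ₂(t,0) ≥ 0` and `|ξ₂(t,0)| ≤ |b|` for `t ∈ [T-2d, T-d]`. -/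
theorem stmt_8 (b σ d T : ℝ) (hσ : σ ≠ 0) (hd : 0 < d) (hT : 2 * d ≤ T)
    (ξ₁ : ℝ → ℝ) (ξ₂ : ℝ → ℝ → ℝ) (ξ₃ : ℝ → ℝ → ℝ → ℝ)
    (hc1 : ContinuousOn ξ₁ (Icc (T - 2 * d) (T - d)))
    (hc2 : ContinuousOn (fun p : ℝ × ℝ => ξ₂ p.1 p.2)
      (Icc (T - 2 * d) (T - d) ×ˢ Icc (-d) 0))
    (hc3 : ContinuousOn (fun p : ℝ × ℝ × ℝ => ξ₃ p.1 p.2.1 p.2.2)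
      (Icc (T - 2 * d) (T - d) ×ˢ Icc (-d) 0 ×ˢ Icc (-d) 0))
    (hsol : isSolutionSlice b σ T d ξ₁ ξ₂ ξ₃) :
    (∀ t ∈ Icc (T - 2 * d) (T - d), ∀ x ∈ Icc t (T - d), 0 ≤ ξ₃ x (t - x) 0) ∧
    (∀ t ∈ Icc (T - 2 * d) (T - d), 0 ≤ b * ξ₂ t 0 ∧ |ξ₂ t 0| ≤ |b|) := by
  have hκ : (0:ℝ) ≤ (σ ^ 2)⁻¹ := by positivity
  have hc : (0:ℝ) ≤ (σ ^ 2)⁻¹ * b ^ 2 := by positivity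
  have hae : T - 2 * d ≤ T - d := by linarith
  have h0m : (0:ℝ) ∈ Icc (-d) 0 := ⟨by linarith, le_rfl⟩
  have heI : T - d ∈ Icc (T - 2 * d) (T - d) := ⟨by linarith, le_rfl⟩
  -- ξ₁ at the right end
  have step1 : ξ₁ (T - d) = 1 := by
    have e1 := (hsol (T - d) heI 0 h0m 0 h0m).1
    simpa using e1
  -- ξ₂ at the right end
  have step2 : ∀ s ∈ Icc (-d) (0:ℝ), ξ₂ (T - d) s = b := by
    intro s hs
    have e2 := (hsol (T - d) heI s hs 0 h0m).2.1
    rw [min_eq_left (by linarith [hs.1] : T - d ≤ T - d + s + d)] at e2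
    simpa [step1] using e2
  -- equation for p(t) = ξ₂ t 0
  have pEq : ∀ t, T - 2 * d ≤ t → t ≤ T - d →
      ξ₂ t 0 = b - (σ ^ 2)⁻¹ * ∫ x in t..(T - d), ξ₂ x 0 * ξ₃ x (t - x) 0 := by
    intro t h1 h2
    have e3 := (hsol t ⟨h1, h2⟩ 0 h0m 0 h0m).2.1
    simp only [add_zero] at e3
    rw [min_eq_left (by linarith : T - d ≤ t + d), step1, mul_one] at e3
    exact e3
  -- equation for g(t,x) = ξ₃ x (t-x) 0
  have gEq : ∀ t x, T - 2 * d ≤ t → t ≤ x → x ≤ T - d →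
      ξ₃ x (t - x) 0 = b * b -
        (σ ^ 2)⁻¹ * ∫ y in x..(T - d), ξ₃ y (t - y) 0 * ξ₃ y 0 (x - y) := by
    intro t x h1 h2 h3
    have hx : x ∈ Icc (T - 2 * d) (T - d) := ⟨h1.trans h2, h3⟩
    have hs : t - x ∈ Icc (-d) (0:ℝ) := ⟨by linarith, by linarith⟩
    have e4 := (hsol x hx (t - x) hs 0 h0m).2.2
    rw [min_eq_left (show t - x ≤ (0:ℝ) by linarith)] at e4
    rw [show x + (t - x) + d = t + d from by ring] at e4
    rw [min_eq_left (show T - d ≤ t + d by linarith)] at e4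
    rw [sub_zero, abs_of_nonpos (show t - x ≤ (0:ℝ) by linarith)] at e4
    rw [step2 (-(t - x) - d) ⟨by linarith, by linarith⟩] at e4
    have hIc : (∫ y in x..(T - d), ξ₃ y (x + (t - x) - y) 0 * ξ₃ y 0 (x + 0 - y))
        = ∫ y in x..(T - d), ξ₃ y (t - y) 0 * ξ₃ y 0 (x - y) := by
      apply intervalIntegral.integral_congr
      intro y hy
      show ξ₃ y (x + (t - x) - y) 0 * ξ₃ y 0 (x + 0 - y) = ξ₃ y (t - y) 0 * ξ₃ y 0 (x - y)
      rw [show x + (t - x) - y = t - y from by ring, show x + 0 - y = x - y from by ring]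
    rw [hIc] at e4
    exact e4
  -- equation for h(t,x) = ξ₃ x 0 (t-x)
  have hEq : ∀ t x, T - 2 * d ≤ t → t ≤ x → x ≤ T - d →
      ξ₃ x 0 (t - x) = b * b -
        (σ ^ 2)⁻¹ * ∫ y in x..(T - d), ξ₃ y (x - y) 0 * ξ₃ y 0 (t - y) := by
    intro t x h1 h2 h3
    have hx : x ∈ Icc (T - 2 * d) (T - d) := ⟨h1.trans h2, h3⟩
    have hs : t - x ∈ Icc (-d) (0:ℝ) := ⟨by linarith, by linarith⟩
    have e5 := (hsol x hx 0 h0m (t - x) hs).2.2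
    rw [min_eq_right (show t - x ≤ (0:ℝ) by linarith)] at e5
    rw [show x + (t - x) + d = t + d from by ring] at e5
    rw [min_eq_left (show T - d ≤ t + d by linarith)] at e5
    rw [zero_sub, abs_neg, abs_of_nonpos (show t - x ≤ (0:ℝ) by linarith)] at e5
    rw [step2 (-(t - x) - d) ⟨by linarith, by linarith⟩] at e5
    have hIc : (∫ y in x..(T - d), ξ₃ y (x + 0 - y) 0 * ξ₃ y 0 (x + (t - x) - y))
        = ∫ y in x..(T - d), ξ₃ y (x - y) 0 * ξ₃ y 0 (t - y) := by
      apply intervalIntegral.integral_congr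
      intro y hy
      show ξ₃ y (x + 0 - y) 0 * ξ₃ y 0 (x + (t - x) - y) = ξ₃ y (x - y) 0 * ξ₃ y 0 (t - y)
      rw [show x + (t - x) - y = t - y from by ring, show x + 0 - y = x - y from by ring]
    rw [hIc] at e5
    exact e5
  -- explicit solution
  set c := (σ ^ 2)⁻¹ * b ^ 2 with hcdef
  set Gf : ℝ → ℝ := fun x => b ^ 2 * (1 + c * (T - d - x))⁻¹ with hGf
  set Pf : ℝ → ℝ := fun x => b * (1 + c * (T - d - x))⁻¹ with hPf
  have hden : ∀ z, z ≤ T - d → (0:ℝ) < 1 + c * (T - d - z) := by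
    intro z hz
    nlinarith [mul_nonneg hc (show (0:ℝ) ≤ T - d - z by linarith)]
  have hGcont : ContinuousOn Gf (Icc (T - 2 * d) (T - d)) := by
    rw [hGf]
    exact continuousOn_const.mul (ContinuousOn.inv₀ (by fun_prop) (fun z hz => (hden z hz.2).ne'))
  have hPcont : ContinuousOn Pf (Icc (T - 2 * d) (T - d)) := by
    rw [hPf]
    exact continuousOn_const.mul (ContinuousOn.inv₀ (by fun_prop) (fun z hz => (hden z hz.2).ne'))
  have hGder : ∀ z, z ≤ T - d → HasDerivAt Gf ((σ ^ 2)⁻¹ * (Gf z * Gf z)) z := by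
    intro z hz
    have hne : (1 + c * (T - d - z)) ≠ 0 := (hden z hz).ne'
    have h1 : HasDerivAt (fun w => 1 + c * (T - d - w)) (c * (-1)) z :=
      (((hasDerivAt_id z).const_sub (T - d)).const_mul c).const_add 1
    have h2 := (h1.inv hne).const_mul (b ^ 2)
    simp only [hGf]
    refine h2.congr_deriv ?_
    rw [div_eq_mul_inv,
      show ((1 + c * (T - d - z)) ^ 2)⁻¹
        = (1 + c * (T - d - z))⁻¹ * (1 + c * (T - d - z))⁻¹ from by rw [pow_two, mul_inv],
      hcdef]
    ring
  have hPder : ∀ z, z ≤ T - d → HasDerivAt Pf ((σ ^ 2)⁻¹ * (Pf z * Gf z)) z := by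
    intro z hz
    have hne : (1 + c * (T - d - z)) ≠ 0 := (hden z hz).ne'
    have h1 : HasDerivAt (fun w => 1 + c * (T - d - w)) (c * (-1)) z :=
      (((hasDerivAt_id z).const_sub (T - d)).const_mul c).const_add 1
    have h2 := (h1.inv hne).const_mul b
    simp only [hPf, hGf]
    refine h2.congr_deriv ?_
    rw [div_eq_mul_inv,
      show ((1 + c * (T - d - z)) ^ 2)⁻¹
        = (1 + c * (T - d - z))⁻¹ * (1 + c * (T - d - z))⁻¹ from by rw [pow_two, mul_inv],
      hcdef]
    ring
  have hGid : ∀ y, T - 2 * d ≤ y → y ≤ T - d →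
      Gf y = b * b - (σ ^ 2)⁻¹ * ∫ z in y..(T - d), Gf z * Gf z := by
    intro y hay hye
    have hcont : ContinuousOn (fun z => (σ ^ 2)⁻¹ * (Gf z * Gf z)) (uIcc y (T - d)) := by
      rw [uIcc_of_le hye]
      exact continuousOn_const.mul ((hGcont.mono (Icc_subset_Icc hay le_rfl)).mul
        (hGcont.mono (Icc_subset_Icc hay le_rfl)))
    have hFTC := intervalIntegral.integral_eq_sub_of_hasDerivAt
      (f := Gf) (f' := fun z => (σ ^ 2)⁻¹ * (Gf z * Gf z))
      (fun z hz => hGder z (by rw [uIcc_of_le hye] at hz; exact hz.2))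
      hcont.intervalIntegrable
    rw [intervalIntegral.integral_const_mul] at hFTC
    have hGe : Gf (T - d) = b * b := by
      simp only [hGf]
      rw [show T - d - (T - d) = 0 from by ring]
      simp [pow_two]
    rw [hGe] at hFTC
    linarith
  have hPid : ∀ y, T - 2 * d ≤ y → y ≤ T - d →
      Pf y = b - (σ ^ 2)⁻¹ * ∫ z in y..(T - d), Pf z * Gf z := by
    intro y hay hye
    have hcont : ContinuousOn (fun z => (σ ^ 2)⁻¹ * (Pf z * Gf z)) (uIcc y (T - d)) := by
      rw [uIcc_of_le hye]
      exact continuousOn_const.mul ((hPcont.mono (Icc_subset_Icc hay le_rfl)).mul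
        (hGcont.mono (Icc_subset_Icc hay le_rfl)))
    have hFTC := intervalIntegral.integral_eq_sub_of_hasDerivAt
      (f := Pf) (f' := fun z => (σ ^ 2)⁻¹ * (Pf z * Gf z))
      (fun z hz => hPder z (by rw [uIcc_of_le hye] at hz; exact hz.2))
      hcont.intervalIntegrable
    rw [intervalIntegral.integral_const_mul] at hFTC
    have hPe : Pf (T - d) = b := by
      simp only [hPf]
      rw [show T - d - (T - d) = 0 from by ring]
      simp
    rw [hPe] at hFTC
    linarith
  -- continuity of traces
  have trg : ∀ u y, T - 2 * d ≤ u → u ≤ y →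
      ContinuousOn (fun z => ξ₃ z (u - z) 0) (Icc y (T - d)) := by
    intro u y hau huy
    have : ContinuousOn ((fun p : ℝ × ℝ × ℝ => ξ₃ p.1 p.2.1 p.2.2) ∘
        fun z : ℝ => (z, u - z, 0)) (Icc y (T - d)) := by
      apply hc3.comp
      · exact (continuous_id.prodMk ((continuous_const.sub continuous_id).prodMk
          continuous_const)).continuousOn
      · intro z hz
        simp only [Set.mem_prod, Set.mem_Icc]
        refine ⟨⟨?_, ?_⟩, ⟨?_, ?_⟩, ?_, ?_⟩ <;> linarith [hz.1, hz.2]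
    exact this
  have trh : ∀ u y, T - 2 * d ≤ u → u ≤ y →
      ContinuousOn (fun z => ξ₃ z 0 (u - z)) (Icc y (T - d)) := by
    intro u y hau huy
    have : ContinuousOn ((fun p : ℝ × ℝ × ℝ => ξ₃ p.1 p.2.1 p.2.2) ∘
        fun z : ℝ => (z, 0, u - z)) (Icc y (T - d)) := by
      apply hc3.comp
      · exact (continuous_id.prodMk (continuous_const.prodMk
          (continuous_const.sub continuous_id))).continuousOn
      · intro z hz
        simp only [Set.mem_prod, Set.mem_Icc]
        refine ⟨⟨?_, ?_⟩, ⟨?_, ?_⟩, ?_, ?_⟩ <;> linarith [hz.1, hz.2]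
    exact this
  have trp : ContinuousOn (fun z => ξ₂ z 0) (Icc (T - 2 * d) (T - d)) := by
    have : ContinuousOn ((fun p : ℝ × ℝ => ξ₂ p.1 p.2) ∘
        fun z : ℝ => (z, 0)) (Icc (T - 2 * d) (T - d)) := by
      apply hc2.comp
      · exact (continuous_id.prodMk continuous_const).continuousOn
      · intro z hz
        simp only [Set.mem_prod, Set.mem_Icc]
        refine ⟨⟨?_, ?_⟩, ?_, ?_⟩ <;> linarith [hz.1, hz.2]
    exact this
  have hgc2 : ContinuousOn (fun q : ℝ × ℝ => ξ₃ q.2 (q.1 - q.2) 0)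
      {q : ℝ × ℝ | T - 2 * d ≤ q.1 ∧ q.1 ≤ q.2 ∧ q.2 ≤ T - d} := by
    have : ContinuousOn ((fun p : ℝ × ℝ × ℝ => ξ₃ p.1 p.2.1 p.2.2) ∘
        fun q : ℝ × ℝ => (q.2, q.1 - q.2, 0))
        {q : ℝ × ℝ | T - 2 * d ≤ q.1 ∧ q.1 ≤ q.2 ∧ q.2 ≤ T - d} := by
      apply hc3.comp
      · exact (continuous_snd.prodMk ((continuous_fst.sub continuous_snd).prodMk
          continuous_const)).continuousOn
      · rintro ⟨u, y⟩ ⟨k1, k2, k3⟩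
        simp only [Set.mem_prod, Set.mem_Icc]
        refine ⟨⟨?_, ?_⟩, ⟨?_, ?_⟩, ?_, ?_⟩ <;> linarith
    exact this
  have hhc2 : ContinuousOn (fun q : ℝ × ℝ => ξ₃ q.2 0 (q.1 - q.2))
      {q : ℝ × ℝ | T - 2 * d ≤ q.1 ∧ q.1 ≤ q.2 ∧ q.2 ≤ T - d} := by
    have : ContinuousOn ((fun p : ℝ × ℝ × ℝ => ξ₃ p.1 p.2.1 p.2.2) ∘
        fun q : ℝ × ℝ => (q.2, 0, q.1 - q.2))
        {q : ℝ × ℝ | T - 2 * d ≤ q.1 ∧ q.1 ≤ q.2 ∧ q.2 ≤ T - d} := by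
      apply hc3.comp
      · exact (continuous_snd.prodMk (continuous_const.prodMk
          (continuous_fst.sub continuous_snd))).continuousOn
      · rintro ⟨u, y⟩ ⟨k1, k2, k3⟩
        simp only [Set.mem_prod, Set.mem_Icc]
        refine ⟨⟨?_, ?_⟩, ⟨?_, ?_⟩, ?_, ?_⟩ <;> linarith
    exact this
  -- global bound
  have hcomp : IsCompact {q : ℝ × ℝ | T - 2 * d ≤ q.1 ∧ q.1 ≤ q.2 ∧ q.2 ≤ T - d} := by
    apply IsCompact.of_isClosed_subset
      (isCompact_Icc (a := ((T - 2 * d, T - 2 * d) : ℝ × ℝ)) (b := (T - d, T - d)))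
    · exact (isClosed_le continuous_const continuous_fst).inter
        ((isClosed_le continuous_fst continuous_snd).inter
          (isClosed_le continuous_snd continuous_const))
    · rintro ⟨u, y⟩ ⟨k1, k2, k3⟩
      simp only [Set.mem_Icc, Prod.mk_le_mk]
      refine ⟨⟨?_, ?_⟩, ?_, ?_⟩ <;> linarith
  obtain ⟨M1, hM1⟩ := hcomp.exists_bound_of_continuousOn hgc2
  obtain ⟨M2, hM2⟩ := hcomp.exists_bound_of_continuousOn hhc2
  obtain ⟨M3, hM3⟩ := isCompact_Icc.exists_bound_of_continuousOn trp
  obtain ⟨M4, hM4⟩ := isCompact_Icc.exists_bound_of_continuousOn hPcont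
  obtain ⟨M5, hM5⟩ := isCompact_Icc.exists_bound_of_continuousOn hGcont
  set M := max (max M1 M2) (max (max M3 M4) M5) with hMdef
  have hMall : ∀ u y, T - 2 * d ≤ u → u ≤ y → y ≤ T - d →
      |ξ₃ y (u - y) 0| ≤ M ∧ |ξ₃ y 0 (u - y)| ≤ M ∧ |ξ₂ y 0| ≤ M ∧ |Pf y| ≤ M ∧ |Gf y| ≤ M := by
    intro u y k1 k2 k3
    have hay : T - 2 * d ≤ y := k1.trans k2
    have b1 := hM1 (u, y) ⟨k1, k2, k3⟩
    have b2 := hM2 (u, y) ⟨k1, k2, k3⟩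
    have b3 := hM3 y ⟨hay, k3⟩
    have b4 := hM4 y ⟨hay, k3⟩
    have b5 := hM5 y ⟨hay, k3⟩
    simp only [Real.norm_eq_abs] at b1 b2 b3 b4 b5
    refine ⟨b1.trans ?_, b2.trans ?_, b3.trans ?_, b4.trans ?_, b5.trans ?_⟩
    · exact le_trans (le_max_left M1 M2) (le_max_left _ _)
    · exact le_trans (le_max_right M1 M2) (le_max_left _ _)
    · exact le_trans (le_trans (le_max_left M3 M4) (le_max_left _ M5)) (le_max_right _ _)
    · exact le_trans (le_trans (le_max_right M3 M4) (le_max_left _ M5)) (le_max_right _ _)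
    · exact le_trans (le_max_right (max M3 M4) M5) (le_max_right _ _)
  -- subtracted integral equations
  have hgS : ∀ u y, T - 2 * d ≤ u → u ≤ y → y ≤ T - d →
      ξ₃ y (u - y) 0 - Gf y = -(σ ^ 2)⁻¹ * ∫ z in y..(T - d),
        (ξ₃ z (u - z) 0 * ξ₃ z 0 (y - z) - Gf z * Gf z) := by
    intro u y k1 k2 k3
    have hay : T - 2 * d ≤ y := k1.trans k2
    have i1 : IntervalIntegrable (fun z => ξ₃ z (u - z) 0 * ξ₃ z 0 (y - z))
        MeasureTheory.volume y (T - d) := by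
      apply ContinuousOn.intervalIntegrable
      rw [uIcc_of_le k3]
      exact (trg u y k1 k2).mul (trh y y hay le_rfl)
    have i2 : IntervalIntegrable (fun z => Gf z * Gf z) MeasureTheory.volume y (T - d) := by
      apply ContinuousOn.intervalIntegrable
      rw [uIcc_of_le k3]
      exact (hGcont.mono (Icc_subset_Icc hay le_rfl)).mul (hGcont.mono (Icc_subset_Icc hay le_rfl))
    rw [gEq u y k1 k2 k3, hGid y hay k3, intervalIntegral.integral_sub i1 i2]
    ring
  have hhS : ∀ u y, T - 2 * d ≤ u → u ≤ y → y ≤ T - d →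
      ξ₃ y 0 (u - y) - Gf y = -(σ ^ 2)⁻¹ * ∫ z in y..(T - d),
        (ξ₃ z (y - z) 0 * ξ₃ z 0 (u - z) - Gf z * Gf z) := by
    intro u y k1 k2 k3
    have hay : T - 2 * d ≤ y := k1.trans k2
    have i1 : IntervalIntegrable (fun z => ξ₃ z (y - z) 0 * ξ₃ z 0 (u - z))
        MeasureTheory.volume y (T - d) := by
      apply ContinuousOn.intervalIntegrable
      rw [uIcc_of_le k3]
      exact (trg y y hay le_rfl).mul (trh u y k1 k2)
    have i2 : IntervalIntegrable (fun z => Gf z * Gf z) MeasureTheory.volume y (T - d) := by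
      apply ContinuousOn.intervalIntegrable
      rw [uIcc_of_le k3]
      exact (hGcont.mono (Icc_subset_Icc hay le_rfl)).mul (hGcont.mono (Icc_subset_Icc hay le_rfl))
    rw [hEq u y k1 k2 k3, hGid y hay k3, intervalIntegral.integral_sub i1 i2]
    ring
  have hpS : ∀ y, T - 2 * d ≤ y → y ≤ T - d →
      ξ₂ y 0 - Pf y = -(σ ^ 2)⁻¹ * ∫ z in y..(T - d),
        (ξ₂ z 0 * ξ₃ z (y - z) 0 - Pf z * Gf z) := by
    intro y hay k3
    have i1 : IntervalIntegrable (fun z => ξ₂ z 0 * ξ₃ z (y - z) 0)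
        MeasureTheory.volume y (T - d) := by
      apply ContinuousOn.intervalIntegrable
      rw [uIcc_of_le k3]
      exact (trp.mono (Icc_subset_Icc hay le_rfl)).mul (trg y y hay le_rfl)
    have i2 : IntervalIntegrable (fun z => Pf z * Gf z) MeasureTheory.volume y (T - d) := by
      apply ContinuousOn.intervalIntegrable
      rw [uIcc_of_le k3]
      exact (hPcont.mono (Icc_subset_Icc hay le_rfl)).mul (hGcont.mono (Icc_subset_Icc hay le_rfl))
    rw [pEq y hay k3, hPid y hay k3, intervalIntegral.integral_sub i1 i2]
    ring
  have key := volterra_eq (a := T - 2 * d) (e := T - d) (κ := (σ ^ 2)⁻¹) (M := M)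
    (g := fun u y => ξ₃ y (u - y) 0) (h := fun u y => ξ₃ y 0 (u - y))
    (p := fun y => ξ₂ y 0) (P := Pf) (G := Gf)
    hae hκ hgc2 hhc2 trp hPcont hGcont hMall hgS hhS hpS
  constructor
  · intro t ht x hx
    have hGx : ξ₃ x (t - x) 0 = Gf x := (key t x ht.1 hx.1 hx.2).1
    rw [hGx]
    simp only [hGf]
    exact mul_nonneg (by positivity) (inv_nonneg.mpr (hden x hx.2).le)
  · intro t ht
    have hpeq : ξ₂ t 0 = Pf t := (key t t ht.1 le_rfl ht.2).2.2
    have hd1 : (1:ℝ) ≤ 1 + c * (T - d - t) := by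
      nlinarith [mul_nonneg hc (show (0:ℝ) ≤ T - d - t by linarith [ht.2])]
    constructor
    · rw [hpeq]
      simp only [hPf]
      rw [show b * (b * (1 + c * (T - d - t))⁻¹) = b ^ 2 * (1 + c * (T - d - t))⁻¹ from by ring]
      exact mul_nonneg (by positivity) (inv_nonneg.mpr (by linarith))
    · rw [hpeq]
      simp only [hPf]
      rw [abs_mul]
      have h1 : |(1 + c * (T - d - t))⁻¹| ≤ 1 := by
        rw [abs_of_nonneg (inv_nonneg.mpr (by linarith))]
        exact inv_le_one_of_one_le₀ hd1
      calc |b| * |(1 + c * (T - d - t))⁻¹| ≤ |b| * 1 :=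
            mul_le_mul_of_nonneg_left h1 (abs_nonneg b)
        _ = |b| := mul_one _
end

section
/- Let n ≥ 1 be an integer, d > 0, and b, σ reals with σ ≠ 0 and T ≥ (n+1)d. Let (a_k) be the sequence a_0 = 1, a_{k+1} = a_k − (d/a_k)(b/σ)², and assume a_1, …, a_{n+1} are all positive. Let Q : [T−nd, T−(n−1)d] → ℝ be continuous with a_n ≤ Q(x) ≤ 1 for every x. Then the n-th slice integral system with coefficient Q admits a unique continuous solution (P₁₁, P₁₂, P₂₂) on [T−(n+1)d, T−nd] × [−d, 0]², and this solution satisfies a_{n+1} ≤ P₁₁(t) ≤ 1 for every t ∈ [T−(n+1)d, T−nd]. -/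
open Set MeasureTheory

noncomputable def auxH (k : ℝ → ℝ) (b Q₀ t₁ t : ℝ) : ℝ :=
  Q₀ / (1 + Q₀ * b ^ 2 * ∫ x in t..t₁, k x)

lemma auxK_hasDerivAt (k : ℝ → ℝ) (t₁ : ℝ) (hk : Continuous k) (t : ℝ) :
    HasDerivAt (fun u => ∫ x in u..t₁, k x) (-(k t)) t := by
  have h2 : HasDerivAt (fun u => ∫ x in t₁..u, k x) (k t) t :=
    intervalIntegral.integral_hasDerivAt_right (hk.intervalIntegrable _ _)
      (hk.stronglyMeasurableAtFilter _ _) hk.continuousAt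
  have := h2.fun_neg
  simpa [intervalIntegral.integral_symm t₁] using this

lemma auxH_hasDerivAt (k : ℝ → ℝ) (b Q₀ t₁ : ℝ) (hk : Continuous k) (hk0 : ∀ x, 0 ≤ k x)
    (hQ₀ : 0 < Q₀) {t : ℝ} (ht : t ≤ t₁) :
    HasDerivAt (auxH k b Q₀ t₁) (b ^ 2 * (auxH k b Q₀ t₁ t) ^ 2 * k t) t := by
  have hK0 : 0 ≤ ∫ x in t..t₁, k x :=
    intervalIntegral.integral_nonneg ht (fun u _ => hk0 u)
  have hden : (0:ℝ) < 1 + Q₀ * b ^ 2 * ∫ x in t..t₁, k x := by positivity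
  have hD : HasDerivAt (fun u => 1 + Q₀ * b ^ 2 * ∫ x in u..t₁, k x)
      (Q₀ * b ^ 2 * (-(k t))) t := ((auxK_hasDerivAt k t₁ hk t).const_mul (Q₀ * b ^ 2)).const_add 1
  have hne := ne_of_gt hden
  have := (hasDerivAt_const t Q₀).fun_div hD hne
  refine this.congr_deriv ?_
  unfold auxH
  field_simp
  ring

lemma auxH_integral (k : ℝ → ℝ) (b Q₀ t₁ : ℝ) (hk : Continuous k) (hk0 : ∀ x, 0 ≤ k x)
    (hQ₀ : 0 < Q₀) {t m : ℝ} (htm : t ≤ m) (hm : m ≤ t₁) :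
    ∫ x in t..m, b ^ 2 * (auxH k b Q₀ t₁ x) ^ 2 * k x
      = auxH k b Q₀ t₁ m - auxH k b Q₀ t₁ t := by
  have huIcc : uIcc t m = Icc t m := uIcc_of_le htm
  apply intervalIntegral.integral_eq_sub_of_hasDerivAt
  · intro x hx
    rw [huIcc] at hx
    exact auxH_hasDerivAt k b Q₀ t₁ hk hk0 hQ₀ (hx.2.trans hm)
  · apply ContinuousOn.intervalIntegrable
    rw [huIcc]
    intro x hx
    have := (auxH_hasDerivAt k b Q₀ t₁ hk hk0 hQ₀ (hx.2.trans hm)).continuousAt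
    exact ContinuousAt.continuousWithinAt (((this.pow 2).const_mul (b^2)).mul hk.continuousAt)


lemma aux_alg (an Q c : ℝ) (han : 0 < an) (han1 : an ≤ 1) (hanQ : an ≤ Q)
    (hQ1 : Q ≤ 1) (hc0 : 0 ≤ c) :
    an - c / an ≤ Q / (1 + Q * c / an) := by
  have hQ0 : 0 < Q := lt_of_lt_of_le han hanQ
  have hden : 0 < 1 + Q * c / an := by positivity
  rw [le_div_iff₀ hden]
  have haa : 0 < an * an := mul_pos han han
  refine le_of_mul_le_mul_right ?_ haa
  have h1 : (an - c / an) * an = an ^ 2 - c := by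
    rw [sub_mul, div_mul_cancel₀ _ (ne_of_gt han)]; ring
  have h2 : (1 + Q * c / an) * an = an + Q * c := by
    rw [add_mul, one_mul, div_mul_cancel₀ _ (ne_of_gt han)]
  have hexp : (an - c / an) * (1 + Q * c / an) * (an * an)
      = (an ^ 2 - c) * (an + Q * c) := by
    calc (an - c / an) * (1 + Q * c / an) * (an * an)
        = ((an - c / an) * an) * ((1 + Q * c / an) * an) := by ring
      _ = (an ^ 2 - c) * (an + Q * c) := by rw [h1, h2]
  rw [hexp]
  have hQan1 : Q * an ≤ 1 := by nlinarith
  nlinarith [mul_nonneg (mul_nonneg han.le han.le) (sub_nonneg.mpr hanQ),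
    mul_nonneg (mul_nonneg hc0 han.le) (sub_nonneg.mpr hQan1),
    mul_nonneg hQ0.le (mul_nonneg hc0 hc0)]


lemma aux_mul3 {x1 x2 x3 y1 y2 y3 : ℝ} (h1 : 0 ≤ x1) (h2 : 0 ≤ x2) (h3 : 0 ≤ x3)
    (g1 : x1 ≤ y1) (g2 : x2 ≤ y2) (g3 : x3 ≤ y3) : x1 * x2 * x3 ≤ y1 * y2 * y3 := by
  have ha := mul_le_mul g1 g2 h2 (le_trans h1 g1)
  exact mul_le_mul ha g3 h3 (mul_nonneg (le_trans h1 g1) (le_trans h2 g2))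

lemma aux_proddiff (u v u' v' : ℝ) : |u * v - u' * v'| ≤ |u| * |v - v'| + |v'| * |u - u'| := by
  have hh : u * v - u' * v' = u * (v - v') + v' * (u - u') := by ring
  rw [hh]
  exact (abs_add_le _ _).trans (by rw [abs_mul, abs_mul])

lemma aux_intbound (f g E : ℝ → ℝ) (x m t₁ C : ℝ) (hxm : x ≤ m) (hmt : m ≤ t₁)
    (hf : IntervalIntegrable f volume x m) (hg : IntervalIntegrable g volume x m)
    (hEint : IntervalIntegrable E volume x t₁)
    (hE0 : ∀ y ∈ Icc x t₁, 0 ≤ E y)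
    (hC : 0 ≤ C)
    (hpt : ∀ y ∈ Icc x m, |f y - g y| ≤ C * E y) :
    |(∫ y in x..m, f y) - ∫ y in x..m, g y| ≤ C * ∫ y in x..t₁, E y := by
  have hxt : x ≤ t₁ := hxm.trans hmt
  have hint_xm : IntervalIntegrable E volume x m :=
    hEint.mono_set (by rw [uIcc_of_le hxm, uIcc_of_le hxt]; exact Icc_subset_Icc le_rfl hmt)
  have hint_mt : IntervalIntegrable E volume m t₁ :=
    hEint.mono_set (by rw [uIcc_of_le hmt, uIcc_of_le hxt]; exact Icc_subset_Icc hxm le_rfl)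
  have h1 : (∫ y in x..m, f y) - ∫ y in x..m, g y = ∫ y in x..m, (f y - g y) :=
    (intervalIntegral.integral_sub hf hg).symm
  rw [h1]
  have h2 : |∫ y in x..m, (f y - g y)| ≤ ∫ y in x..m, |f y - g y| :=
    intervalIntegral.abs_integral_le_integral_abs hxm
  have h3 : (∫ y in x..m, |f y - g y|) ≤ ∫ y in x..m, C * E y :=
    intervalIntegral.integral_mono_on hxm (hf.sub hg).abs (hint_xm.const_mul C) hpt
  have h4 : (∫ y in x..m, C * E y) ≤ ∫ y in x..t₁, C * E y := by
    have hadd := intervalIntegral.integral_add_adjacent_intervals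
      (hint_xm.const_mul C) (hint_mt.const_mul C)
    have h5 : 0 ≤ ∫ y in m..t₁, C * E y :=
      intervalIntegral.integral_nonneg hmt (fun y hy => mul_nonneg hC (hE0 y ⟨hxm.trans hy.1, hy.2⟩))
    linarith
  simp only [intervalIntegral.integral_const_mul] at h3 h4
  linarith

def isSliceSolution (n : ℕ) (b σ d T : ℝ) (Q : ℝ → ℝ)
    (P11 : ℝ → ℝ) (P12 : ℝ → ℝ → ℝ) (P22 : ℝ → ℝ → ℝ → ℝ) : Prop :=
  ∀ t ∈ Icc (T - ((n : ℝ) + 1) * d) (T - (n : ℝ) * d), ∀ s ∈ Icc (-d) 0, ∀ r ∈ Icc (-d) 0,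
    P11 t = Q (T - (n : ℝ) * d) -
      ∫ x in t..(T - (n : ℝ) * d), (P12 x 0) ^ 2 / (σ ^ 2 * Q (x + d)) ∧
    P12 t s = b * P11 (min (T - (n : ℝ) * d) (t + s + d)) -
      ∫ x in t..(min (T - (n : ℝ) * d) (t + s + d)),
        P12 x 0 * P22 x (t + s - x) 0 / (σ ^ 2 * Q (x + d)) ∧
    P22 t s r = b * P12 (min (T - (n : ℝ) * d) (t + min s r + d)) (|s - r| - d) -
      ∫ x in t..(min (T - (n : ℝ) * d) (t + min s r + d)),
        P22 x (t + s - x) 0 * P22 x 0 (t + r - x) / (σ ^ 2 * Q (x + d))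

def isContTripleSlice (n : ℕ) (d T : ℝ)
    (P11 : ℝ → ℝ) (P12 : ℝ → ℝ → ℝ) (P22 : ℝ → ℝ → ℝ → ℝ) : Prop :=
  ContinuousOn P11 (Icc (T - ((n : ℝ) + 1) * d) (T - (n : ℝ) * d)) ∧
  ContinuousOn (fun p : ℝ × ℝ => P12 p.1 p.2)
    (Icc (T - ((n : ℝ) + 1) * d) (T - (n : ℝ) * d) ×ˢ Icc (-d) 0) ∧
  ContinuousOn (fun p : ℝ × ℝ × ℝ => P22 p.1 p.2.1 p.2.2)
    (Icc (T - ((n : ℝ) + 1) * d) (T - (n : ℝ) * d) ×ˢ Icc (-d) 0 ×ˢ Icc (-d) 0)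

set_option maxHeartbeats 1000000 in
/-- If `a₁, …, a_{n+1}` are positive and `Q` is a continuous coefficient
on the previous slice with `aₙ ≤ Q ≤ 1`, then the `n`-th slice integral system has a
unique continuous solution, whose first component satisfies `a_{n+1} ≤ P₁₁ ≤ 1`. -/
theorem stmt_10 (n : ℕ) (hn : 1 ≤ n) (d b σ T : ℝ) (hd : 0 < d) (hσ : σ ≠ 0)
    (hT : ((n : ℝ) + 1) * d ≤ T)
    (a : ℕ → ℝ) (ha0 : a 0 = 1)
    (harec : ∀ k : ℕ, a (k + 1) = a k - (d / a k) * (b / σ) ^ 2)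
    (hapos : ∀ k : ℕ, 1 ≤ k → k ≤ n + 1 → 0 < a k)
    (Q : ℝ → ℝ)
    (hQcont : ContinuousOn Q (Icc (T - (n : ℝ) * d) (T - (n : ℝ) * d + d)))
    (hQ : ∀ x ∈ Icc (T - (n : ℝ) * d) (T - (n : ℝ) * d + d), a n ≤ Q x ∧ Q x ≤ 1) :
    ∃ (P11 : ℝ → ℝ) (P12 : ℝ → ℝ → ℝ) (P22 : ℝ → ℝ → ℝ → ℝ),
      isContTripleSlice n d T P11 P12 P22 ∧ isSliceSolution n b σ d T Q P11 P12 P22 ∧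
      (∀ t ∈ Icc (T - ((n : ℝ) + 1) * d) (T - (n : ℝ) * d),
        a (n + 1) ≤ P11 t ∧ P11 t ≤ 1) ∧
      ∀ (P11' : ℝ → ℝ) (P12' : ℝ → ℝ → ℝ) (P22' : ℝ → ℝ → ℝ → ℝ),
        isContTripleSlice n d T P11' P12' P22' →
        isSliceSolution n b σ d T Q P11' P12' P22' →
          (∀ t ∈ Icc (T - ((n : ℝ) + 1) * d) (T - (n : ℝ) * d), P11' t = P11 t) ∧
          (∀ t ∈ Icc (T - ((n : ℝ) + 1) * d) (T - (n : ℝ) * d), ∀ s ∈ Icc (-d) 0,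
            P12' t s = P12 t s) ∧
          (∀ t ∈ Icc (T - ((n : ℝ) + 1) * d) (T - (n : ℝ) * d), ∀ s ∈ Icc (-d) 0,
            ∀ r ∈ Icc (-d) 0, P22' t s r = P22 t s r) := by
  -- notation
  set t₁ : ℝ := T - (n : ℝ) * d with ht₁
  set t₀ : ℝ := T - ((n : ℝ) + 1) * d with ht₀
  have ht01 : t₀ + d = t₁ := by rw [ht₀, ht₁]; ring
  have ht0le1 : t₀ ≤ t₁ := by linarith
  have hσ2 : (0:ℝ) < σ ^ 2 := by positivity
  have han : 0 < a n := hapos n hn (by omega)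
  -- a k ≤ 1 for k ≤ n
  have ha_le : ∀ k, k ≤ n → a k ≤ 1 := by
    intro k hk
    induction k with
    | zero => rw [ha0]
    | succ m ih =>
      have hm : m ≤ n := by omega
      have hmpos : 0 < a m := by
        rcases Nat.eq_zero_or_pos m with h0 | h1
        · rw [h0, ha0]; norm_num
        · exact hapos m h1 (by omega)
      have : (0:ℝ) ≤ (d / a m) * (b / σ) ^ 2 := by positivity
      rw [harec m]
      linarith [ih hm]
  have han1 : a n ≤ 1 := ha_le n le_rfl
  -- extended coefficient
  set Qe : ℝ → ℝ := fun y => Q (max t₁ (min (t₁ + d) y)) with hQe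
  have hmem : ∀ y : ℝ, max t₁ (min (t₁ + d) y) ∈ Icc t₁ (t₁ + d) := by
    intro y
    constructor
    · exact le_max_left _ _
    · exact max_le (by linarith) (min_le_left _ _)
  have hQe_cont : Continuous Qe := by
    apply hQcont.comp_continuous _ hmem
    exact Continuous.max continuous_const (continuous_const.min continuous_id)
  have hQe_bnd : ∀ y, a n ≤ Qe y ∧ Qe y ≤ 1 := fun y => hQ _ (hmem y)
  have hQe_eq : ∀ x, t₀ ≤ x → x ≤ t₁ → Qe (x + d) = Q (x + d) := by
    intro x hx1 hx2
    have h1 : min (t₁ + d) (x + d) = x + d := min_eq_right (by linarith)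
    have h2 : max t₁ (x + d) = x + d := max_eq_right (by linarith)
    rw [hQe]; simp only [h1, h2]
  set k : ℝ → ℝ := fun x => (σ ^ 2 * Qe (x + d))⁻¹ with hk
  have hQe_pos : ∀ y, 0 < Qe y := fun y => lt_of_lt_of_le han (hQe_bnd y).1
  have hden_pos : ∀ x, 0 < σ ^ 2 * Qe (x + d) := fun x => mul_pos hσ2 (hQe_pos _)
  have hk_cont : Continuous k := by
    apply Continuous.inv₀
    · exact continuous_const.mul (hQe_cont.comp (continuous_id.add continuous_const))
    · exact fun x => ne_of_gt (hden_pos x)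
  have hk_pos : ∀ x, 0 < k x := fun x => inv_pos.mpr (hden_pos x)
  have hk0 : ∀ x, 0 ≤ k x := fun x => (hk_pos x).le
  have hk_le : ∀ x, k x ≤ (σ ^ 2 * a n)⁻¹ := by
    intro x
    apply inv_anti₀ (by positivity)
    exact mul_le_mul_of_nonneg_left (hQe_bnd _).1 hσ2.le
  set Q₀ : ℝ := Q t₁ with hQ₀def
  have hQ₀mem := hQ t₁ ⟨le_refl _, by linarith⟩
  have hanQ₀ : a n ≤ Q₀ := hQ₀mem.1
  have hQ₀le1 : Q₀ ≤ 1 := hQ₀mem.2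
  have hQ₀ : 0 < Q₀ := lt_of_lt_of_le han hanQ₀
  set h : ℝ → ℝ := auxH k b Q₀ t₁ with hhdef
  have hht₁ : h t₁ = Q₀ := by
    rw [hhdef]; unfold auxH; simp
  have hint : ∀ t m : ℝ, t ≤ m → m ≤ t₁ →
      ∫ x in t..m, b ^ 2 * (h x) ^ 2 * k x = h m - h t :=
    fun t m htm hm => auxH_integral k b Q₀ t₁ hk_cont hk0 hQ₀ htm hm
  have hcontAt : ∀ t : ℝ, t ≤ t₁ → ContinuousAt h t :=
    fun t ht => (auxH_hasDerivAt k b Q₀ t₁ hk_cont hk0 hQ₀ ht).continuousAt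
  have hcont : ContinuousOn h (Icc t₀ t₁) :=
    fun t ht => (hcontAt t ht.2).continuousWithinAt
  -- bounds on h
  have hbound : ∀ t, t₀ ≤ t → t ≤ t₁ → a (n+1) ≤ h t ∧ h t ≤ 1 := by
    intro t ht0 ht1
    have hK0 : 0 ≤ ∫ x in t..t₁, k x :=
      intervalIntegral.integral_nonneg ht1 (fun u _ => hk0 u)
    have hKle : (∫ x in t..t₁, k x) ≤ d * (σ ^ 2 * a n)⁻¹ := by
      have h1 : (∫ x in t..t₁, k x) ≤ ∫ _x in t..t₁, (σ ^ 2 * a n)⁻¹ := by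
        apply intervalIntegral.integral_mono_on ht1
          (hk_cont.intervalIntegrable _ _) (intervalIntegrable_const)
        exact fun x _ => hk_le x
      rw [intervalIntegral.integral_const, smul_eq_mul] at h1
      have : (t₁ - t) * (σ ^ 2 * a n)⁻¹ ≤ d * (σ ^ 2 * a n)⁻¹ := by
        apply mul_le_mul_of_nonneg_right (by linarith) (by positivity)
      linarith
    have hKnn : 0 ≤ Q₀ * b ^ 2 * ∫ x in t..t₁, k x := mul_nonneg (by positivity) hK0
    have hden1 : (1:ℝ) ≤ 1 + Q₀ * b ^ 2 * ∫ x in t..t₁, k x := by linarith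
    have hupper : h t ≤ 1 := by
      rw [hhdef]; unfold auxH
      rw [div_le_one (by linarith)]
      linarith
    set c : ℝ := d * b ^ 2 / σ ^ 2 with hc
    have hc0 : 0 ≤ c := by positivity
    have hdenle : 1 + Q₀ * b ^ 2 * (∫ x in t..t₁, k x) ≤ 1 + Q₀ * c / a n := by
      have h1 : Q₀ * b ^ 2 * (∫ x in t..t₁, k x) ≤ Q₀ * b ^ 2 * (d * (σ ^ 2 * a n)⁻¹) :=
        mul_le_mul_of_nonneg_left hKle (by positivity)
      have heq : Q₀ * b ^ 2 * (d * (σ ^ 2 * a n)⁻¹) = Q₀ * c / a n := by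
        rw [hc]; field_simp
      linarith
    have hden2 : 0 < 1 + Q₀ * c / a n := by positivity
    have hlow1 : Q₀ / (1 + Q₀ * c / a n) ≤ h t := by
      rw [hhdef]; unfold auxH
      gcongr
    have key2 : a (n+1) ≤ Q₀ / (1 + Q₀ * c / a n) := by
      rw [harec n]
      have he : d / a n * (b / σ) ^ 2 = c / a n := by
        rw [hc, div_pow, div_mul_div_comm, mul_comm (a n) (σ ^ 2), div_div]
      rw [he]
      exact aux_alg (a n) Q₀ c han han1 hanQ₀ hQ₀le1 hc0
    exact ⟨le_trans key2 hlow1, hupper⟩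
  -- the candidate solution
  refine ⟨h, fun t _ => b * h t, fun t _ _ => b ^ 2 * h t, ⟨hcont, ?_, ?_⟩, ?_, ?_, ?_⟩
  · exact continuousOn_const.mul (hcont.comp continuousOn_fst (fun p hp => hp.1))
  · exact continuousOn_const.mul (hcont.comp continuousOn_fst (fun p hp => hp.1))
  · -- solution property
    intro t ht s hs r hr
    dsimp only
    have ht0 : t₀ ≤ t := ht.1
    have ht1 : t ≤ t₁ := ht.2
    refine ⟨?_, ?_, ?_⟩
    · have hcongr : (∫ x in t..t₁, (b * h x) ^ 2 / (σ ^ 2 * Q (x + d)))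
          = ∫ x in t..t₁, b ^ 2 * (h x) ^ 2 * k x := by
        apply intervalIntegral.integral_congr
        intro x hx
        rw [uIcc_of_le ht1] at hx
        dsimp only
        have hQx : Q (x + d) = Qe (x + d) := (hQe_eq x (le_trans ht0 hx.1) hx.2).symm
        rw [hQx]
        show (b * h x) ^ 2 / (σ ^ 2 * Qe (x + d)) = b ^ 2 * (h x) ^ 2 * (σ ^ 2 * Qe (x + d))⁻¹
        rw [div_eq_mul_inv]; ring
      rw [hcongr, hint t t₁ ht1 le_rfl, hht₁]
      ring
    · set m : ℝ := min t₁ (t + s + d) with hm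
      have hm1 : t ≤ m := le_min ht1 (by linarith [hs.1])
      have hm2 : m ≤ t₁ := min_le_left _ _
      have hcongr : (∫ x in t..m, (b * h x) * (b ^ 2 * h x) / (σ ^ 2 * Q (x + d)))
          = ∫ x in t..m, b * (b ^ 2 * (h x) ^ 2 * k x) := by
        apply intervalIntegral.integral_congr
        intro x hx
        rw [uIcc_of_le hm1] at hx
        dsimp only
        have hQx : Q (x + d) = Qe (x + d) :=
          (hQe_eq x (le_trans ht0 hx.1) (le_trans hx.2 hm2)).symm
        rw [hQx]
        show (b * h x) * (b ^ 2 * h x) / (σ ^ 2 * Qe (x + d))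
            = b * (b ^ 2 * (h x) ^ 2 * (σ ^ 2 * Qe (x + d))⁻¹)
        rw [div_eq_mul_inv]; ring
      rw [hcongr, intervalIntegral.integral_const_mul, hint t m hm1 hm2]
      ring
    · set m : ℝ := min t₁ (t + min s r + d) with hm
      have hm1 : t ≤ m := le_min ht1 (by linarith [le_min hs.1 hr.1])
      have hm2 : m ≤ t₁ := min_le_left _ _
      have hcongr : (∫ x in t..m, (b ^ 2 * h x) * (b ^ 2 * h x) / (σ ^ 2 * Q (x + d)))
          = ∫ x in t..m, b ^ 2 * (b ^ 2 * (h x) ^ 2 * k x) := by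
        apply intervalIntegral.integral_congr
        intro x hx
        rw [uIcc_of_le hm1] at hx
        dsimp only
        have hQx : Q (x + d) = Qe (x + d) :=
          (hQe_eq x (le_trans ht0 hx.1) (le_trans hx.2 hm2)).symm
        rw [hQx]
        show (b ^ 2 * h x) * (b ^ 2 * h x) / (σ ^ 2 * Qe (x + d))
            = b ^ 2 * (b ^ 2 * (h x) ^ 2 * (σ ^ 2 * Qe (x + d))⁻¹)
        rw [div_eq_mul_inv]; ring
      rw [hcongr, intervalIntegral.integral_const_mul, hint t m hm1 hm2]
      ring
  · exact fun t ht => hbound t ht.1 ht.2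
  · -- uniqueness
    intro A B C hcontT hsol
    have hd0 : (-d : ℝ) ≤ 0 := by linarith
    have h0mem : (0:ℝ) ∈ Icc (-d) 0 := ⟨hd0, le_rfl⟩
    have hdmem : (-d : ℝ) ∈ Icc (-d) 0 := ⟨le_rfl, hd0⟩
    obtain ⟨hA, hB, hC⟩ := hcontT
    set S : ℝ → Set (ℝ × ℝ × ℝ) := fun t => Icc t t₁ ×ˢ Icc (-d) 0 ×ˢ Icc (-d) 0 with hSdef
    have hSsub : ∀ {u v : ℝ}, u ≤ v → S v ⊆ S u := by
      intro u v huv p hp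
      exact ⟨⟨le_trans huv hp.1.1, hp.1.2⟩, hp.2⟩
    have hScompact : ∀ t, IsCompact (S t) :=
      fun t => isCompact_Icc.prod (isCompact_Icc.prod isCompact_Icc)
    have hSne : ∀ t, t ≤ t₁ → (S t).Nonempty :=
      fun t ht => ⟨(t, -d, -d), ⟨le_rfl, ht⟩, hdmem, hdmem⟩
    set e : ℝ × ℝ × ℝ → ℝ := fun p =>
      max (|A p.1 - h p.1|)
        (max (|B p.1 p.2.1 - b * h p.1|) (|C p.1 p.2.1 p.2.2 - b ^ 2 * h p.1|)) with hedef
    have hA' : ContinuousOn (fun p : ℝ × ℝ × ℝ => A p.1) (S t₀) :=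
      hA.comp continuousOn_fst (fun p hp => hp.1)
    have hh' : ContinuousOn (fun p : ℝ × ℝ × ℝ => h p.1) (S t₀) :=
      hcont.comp continuousOn_fst (fun p hp => hp.1)
    have hB' : ContinuousOn (fun p : ℝ × ℝ × ℝ => B p.1 p.2.1) (S t₀) := by
      have hm : Continuous (fun p : ℝ × ℝ × ℝ => (p.1, p.2.1)) := by fun_prop
      exact hB.comp hm.continuousOn (fun p hp => ⟨hp.1, hp.2.1⟩)
    have hC' : ContinuousOn (fun p : ℝ × ℝ × ℝ => C p.1 p.2.1 p.2.2) (S t₀) := hC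
    have hecont : ContinuousOn e (S t₀) := by
      apply ContinuousOn.sup
      · exact (hA'.sub hh').abs
      · exact ((hB'.sub (continuousOn_const.mul hh')).abs).sup
          ((hC'.sub (continuousOn_const.mul hh')).abs)
    set E : ℝ → ℝ := fun t => sSup (e '' S t) with hEdef
    have hbdd : ∀ t, t₀ ≤ t → BddAbove (e '' S t) :=
      fun t ht => (hScompact t).bddAbove_image (hecont.mono (hSsub ht))
    have hE_point : ∀ t, t₀ ≤ t → ∀ p ∈ S t, e p ≤ E t :=
      fun t ht p hp => le_csSup (hbdd t ht) (mem_image_of_mem e hp)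
    have hE_A : ∀ y ∈ Icc t₀ t₁, |A y - h y| ≤ E y := by
      intro y hy
      have hq := hE_point y hy.1 (y, -d, -d) ⟨⟨le_rfl, hy.2⟩, hdmem, hdmem⟩
      simp only [hedef] at hq
      exact le_trans (le_max_left _ _) hq
    have hE_B : ∀ y ∈ Icc t₀ t₁, ∀ u ∈ Icc (-d) 0, |B y u - b * h y| ≤ E y := by
      intro y hy u hu
      have hq := hE_point y hy.1 (y, u, -d) ⟨⟨le_rfl, hy.2⟩, hu, hdmem⟩
      simp only [hedef] at hq
      exact le_trans (le_trans (le_max_left _ _) (le_max_right _ _)) hq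
    have hE_C : ∀ y ∈ Icc t₀ t₁, ∀ u ∈ Icc (-d) 0, ∀ v ∈ Icc (-d) 0,
        |C y u v - b ^ 2 * h y| ≤ E y := by
      intro y hy u hu v hv
      have hq := hE_point y hy.1 (y, u, v) ⟨⟨le_rfl, hy.2⟩, hu, hv⟩
      simp only [hedef] at hq
      exact le_trans (le_trans (le_max_right _ _) (le_max_right _ _)) hq
    have hE0 : ∀ t ∈ Icc t₀ t₁, 0 ≤ E t :=
      fun t ht => le_trans (abs_nonneg _) (hE_A t ht)
    have hE_anti : AntitoneOn E (Icc t₀ t₁) := by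
      intro u hu v hv huv
      exact csSup_le_csSup (hbdd u hu.1) ((hSne v hv.2).image e) (image_mono (hSsub huv))
    have hEint : ∀ x ∈ Icc t₀ t₁, IntervalIntegrable E volume x t₁ := by
      intro x hx
      have hanti : AntitoneOn E (uIcc x t₁) := by
        rw [uIcc_of_le hx.2]
        exact hE_anti.mono (Icc_subset_Icc hx.1 le_rfl)
      exact hanti.intervalIntegrable
    have hEnn : ∀ x ∈ Icc t₀ t₁, 0 ≤ ∫ y in x..t₁, E y := fun x hx =>
      intervalIntegral.integral_nonneg hx.2 (fun y hy => hE0 y ⟨le_trans hx.1 hy.1, hy.2⟩)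
    have hImono : ∀ {x m : ℝ}, x ∈ Icc t₀ t₁ → m ∈ Icc t₀ t₁ → x ≤ m →
        (∫ y in m..t₁, E y) ≤ ∫ y in x..t₁, E y := by
      intro x m hx hm hxm
      have i1 : IntervalIntegrable E volume x m :=
        (hEint x hx).mono_set
          (by rw [uIcc_of_le hxm, uIcc_of_le hx.2]; exact Icc_subset_Icc le_rfl hm.2)
      have hplus := intervalIntegral.integral_add_adjacent_intervals i1 (hEint m hm)
      have h5 : 0 ≤ ∫ y in x..m, E y :=
        intervalIntegral.integral_nonneg hxm
          (fun y hy => hE0 y ⟨le_trans hx.1 hy.1, le_trans hy.2 hm.2⟩)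
      linarith
    obtain ⟨M0, hM0⟩ := (hScompact t₀).exists_bound_of_continuousOn
      (((hA'.abs).sup (hh'.abs)).sup ((hB'.abs).sup (hC'.abs)))
    set M : ℝ := max M0 1 with hMdef
    have hM1 : (1:ℝ) ≤ M := le_max_right _ _
    have hMnn : (0:ℝ) ≤ M := le_trans zero_le_one hM1
    have hgM : ∀ p ∈ S t₀,
        max (max |A p.1| |h p.1|) (max |B p.1 p.2.1| |C p.1 p.2.1 p.2.2|) ≤ M := by
      intro p hp
      have h1 := hM0 p hp
      rw [Real.norm_eq_abs] at h1
      exact le_trans (le_trans (le_abs_self _) h1) (le_max_left _ _)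
    have hMh : ∀ y ∈ Icc t₀ t₁, |h y| ≤ M := fun y hy =>
      le_trans (le_trans (le_max_right _ _) (le_max_left _ _)) (hgM (y, -d, -d) ⟨hy, hdmem, hdmem⟩)
    have hMB : ∀ y ∈ Icc t₀ t₁, ∀ u ∈ Icc (-d) 0, |B y u| ≤ M := fun y hy u hu =>
      le_trans (le_trans (le_max_left _ _) (le_max_right _ _)) (hgM (y, u, -d) ⟨hy, hu, hdmem⟩)
    have hMC : ∀ y ∈ Icc t₀ t₁, ∀ u ∈ Icc (-d) 0, ∀ v ∈ Icc (-d) 0, |C y u v| ≤ M :=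
      fun y hy u hu v hv =>
      le_trans (le_trans (le_max_right _ _) (le_max_right _ _)) (hgM (y, u, v) ⟨hy, hu, hv⟩)
    set κ : ℝ := (σ ^ 2 * a n)⁻¹ with hκdef
    have hκ0 : 0 ≤ κ := by rw [hκdef]; positivity
    set L1 : ℝ := (M + |b| * M) * κ with hL1def
    have hL1 : 0 ≤ L1 :=
      mul_nonneg (add_nonneg hMnn (mul_nonneg (abs_nonneg b) hMnn)) hκ0
    set L2' : ℝ := (M + b ^ 2 * M) * κ with hL2'def
    have hL2'nn : 0 ≤ L2' :=
      mul_nonneg (add_nonneg hMnn (mul_nonneg (by positivity) hMnn)) hκ0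
    set L2 : ℝ := |b| * L1 + L2' with hL2def
    have hL2nn : 0 ≤ L2 := add_nonneg (mul_nonneg (abs_nonneg b) hL1) hL2'nn
    set L3 : ℝ := |b| * L2 + L2' with hL3def
    have hL3nn : 0 ≤ L3 := add_nonneg (mul_nonneg (abs_nonneg b) hL2nn) hL2'nn
    set L : ℝ := max L1 (max L2 L3) with hLdef
    have hL0 : 0 ≤ L := le_trans hL1 (le_max_left _ _)
    have hB0cont : ContinuousOn (fun y => B y 0) (Icc t₀ t₁) := by
      have hm : Continuous (fun y : ℝ => (y, (0:ℝ))) := by fun_prop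
      exact hB.comp hm.continuousOn (fun y hy => ⟨hy, h0mem⟩)
    have hb2M : ∀ y ∈ Icc t₀ t₁, |b ^ 2 * h y| ≤ b ^ 2 * M := by
      intro y hy
      rw [abs_mul, abs_of_nonneg (show (0:ℝ) ≤ b ^ 2 by positivity)]
      exact mul_le_mul_of_nonneg_left (hMh y hy) (by positivity)
    -- Estimate 1
    have est1 : ∀ x ∈ Icc t₀ t₁, |A x - h x| ≤ L1 * ∫ y in x..t₁, E y := by
      intro x hx
      have e1 := (hsol x hx 0 h0mem 0 h0mem).1
      rw [← ht₁, ← hQ₀def] at e1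
      have hconv : (∫ y in x..t₁, (B y 0) ^ 2 / (σ ^ 2 * Q (y + d)))
          = ∫ y in x..t₁, (B y 0) ^ 2 * k y := by
        apply intervalIntegral.integral_congr
        intro y hy
        rw [uIcc_of_le hx.2] at hy
        dsimp only
        rw [← hQe_eq y (le_trans hx.1 hy.1) hy.2, div_eq_mul_inv]
      rw [hconv] at e1
      have e2 : h x = Q₀ - ∫ y in x..t₁, b ^ 2 * (h y) ^ 2 * k y := by
        rw [hint x t₁ hx.2 le_rfl, hht₁]; ring
      have hAx : A x - h x
          = -(((∫ y in x..t₁, (B y 0) ^ 2 * k y))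
              - ∫ y in x..t₁, b ^ 2 * (h y) ^ 2 * k y) := by
        rw [e1, e2]; ring
      have hfint : IntervalIntegrable (fun y => (B y 0) ^ 2 * k y) volume x t₁ := by
        apply ContinuousOn.intervalIntegrable
        rw [uIcc_of_le hx.2]
        exact ((hB0cont.mono (Icc_subset_Icc hx.1 le_rfl)).pow 2).mul hk_cont.continuousOn
      have hgint : IntervalIntegrable (fun y => b ^ 2 * (h y) ^ 2 * k y) volume x t₁ := by
        apply ContinuousOn.intervalIntegrable
        rw [uIcc_of_le hx.2]
        exact (continuousOn_const.mul ((hcont.mono (Icc_subset_Icc hx.1 le_rfl)).pow 2)).mul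
          hk_cont.continuousOn
      have hpt : ∀ y ∈ Icc x t₁,
          |(B y 0) ^ 2 * k y - b ^ 2 * (h y) ^ 2 * k y| ≤ L1 * E y := by
        intro y hy
        have hyI : y ∈ Icc t₀ t₁ := ⟨le_trans hx.1 hy.1, hy.2⟩
        have hfac : (B y 0) ^ 2 * k y - b ^ 2 * (h y) ^ 2 * k y
            = ((B y 0 - b * h y) * (B y 0 + b * h y)) * k y := by ring
        rw [hfac, abs_mul, abs_mul, abs_of_nonneg (hk0 y)]
        have h1 : |B y 0 - b * h y| ≤ E y := hE_B y hyI 0 h0mem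
        have h2 : |B y 0 + b * h y| ≤ M + |b| * M := by
          refine (abs_add_le _ _).trans (add_le_add (hMB y hyI 0 h0mem) ?_)
          rw [abs_mul]
          exact mul_le_mul_of_nonneg_left (hMh y hyI) (abs_nonneg b)
        refine le_trans (aux_mul3 (abs_nonneg _) (abs_nonneg _) (hk0 y) h1 h2 (hk_le y)) ?_
        rw [hL1def]
        exact le_of_eq (by ring)
      have hmain := aux_intbound (fun y => (B y 0) ^ 2 * k y)
        (fun y => b ^ 2 * (h y) ^ 2 * k y) E x t₁ t₁ L1 hx.2 le_rfl hfint hgint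
        (hEint x hx) (fun y hy => hE0 y ⟨le_trans hx.1 hy.1, hy.2⟩) hL1 hpt
      rw [hAx, abs_neg]
      exact hmain
    -- Estimate 2
    have est2 : ∀ x ∈ Icc t₀ t₁, ∀ s ∈ Icc (-d) 0,
        |B x s - b * h x| ≤ L2 * ∫ y in x..t₁, E y := by
      intro x hx s hs
      have e1 := (hsol x hx s hs 0 h0mem).2.1
      rw [← ht₁] at e1
      set m : ℝ := min t₁ (x + s + d) with hmdef
      have hm1 : x ≤ m := le_min hx.2 (by linarith [hs.1])
      have hm2 : m ≤ t₁ := min_le_left _ _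
      have hmI : m ∈ Icc t₀ t₁ := ⟨le_trans hx.1 hm1, hm2⟩
      have hmr : m ≤ x + s + d := min_le_right _ _
      have hconv : (∫ y in x..m, B y 0 * C y (x + s - y) 0 / (σ ^ 2 * Q (y + d)))
          = ∫ y in x..m, B y 0 * C y (x + s - y) 0 * k y := by
        apply intervalIntegral.integral_congr
        intro y hy
        rw [uIcc_of_le hm1] at hy
        dsimp only
        rw [← hQe_eq y (le_trans hx.1 hy.1) (le_trans hy.2 hm2), div_eq_mul_inv]
      rw [hconv] at e1
      have e2 : b * h x = b * h m - ∫ y in x..m, (b * h y) * (b ^ 2 * h y) * k y := by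
        have hc2 : (∫ y in x..m, (b * h y) * (b ^ 2 * h y) * k y)
            = ∫ y in x..m, b * (b ^ 2 * (h y) ^ 2 * k y) :=
          intervalIntegral.integral_congr (fun y hy => by
            show (b * h y) * (b ^ 2 * h y) * k y = b * (b ^ 2 * (h y) ^ 2 * k y); ring)
        rw [hc2, intervalIntegral.integral_const_mul, hint x m hm1 hm2]; ring
      have hdiff : B x s - b * h x
          = b * (A m - h m) - ((∫ y in x..m, B y 0 * C y (x + s - y) 0 * k y)
              - ∫ y in x..m, (b * h y) * (b ^ 2 * h y) * k y) := by
        rw [e1, e2]; ring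
      have htri : |B x s - b * h x| ≤ |b| * |A m - h m|
          + |(∫ y in x..m, B y 0 * C y (x + s - y) 0 * k y)
              - ∫ y in x..m, (b * h y) * (b ^ 2 * h y) * k y| := by
        rw [hdiff, sub_eq_add_neg]
        refine (abs_add_le _ _).trans ?_
        rw [abs_neg, abs_mul]
      have hCcont1 : ContinuousOn (fun y => C y (x + s - y) 0) (Icc x m) := by
        have hmc : Continuous (fun y : ℝ => (y, x + s - y, (0:ℝ))) := by fun_prop
        apply hC.comp hmc.continuousOn
        intro y hy
        dsimp only
        refine ⟨⟨le_trans hx.1 hy.1, le_trans hy.2 hm2⟩, ⟨?_, ?_⟩, h0mem⟩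
        · show -d ≤ x + s - y
          linarith [hy.2]
        · show x + s - y ≤ 0
          linarith [hy.1, hs.2]
      have hfint : IntervalIntegrable (fun y => B y 0 * C y (x + s - y) 0 * k y) volume x m := by
        apply ContinuousOn.intervalIntegrable
        rw [uIcc_of_le hm1]
        exact ((hB0cont.mono (Icc_subset_Icc hx.1 hm2)).mul hCcont1).mul hk_cont.continuousOn
      have hgint : IntervalIntegrable (fun y => (b * h y) * (b ^ 2 * h y) * k y) volume x m := by
        apply ContinuousOn.intervalIntegrable
        rw [uIcc_of_le hm1]
        have hhm : ContinuousOn h (Icc x m) := hcont.mono (Icc_subset_Icc hx.1 hm2)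
        exact ((continuousOn_const.mul hhm).mul (continuousOn_const.mul hhm)).mul
          hk_cont.continuousOn
      have hpt : ∀ y ∈ Icc x m,
          |B y 0 * C y (x + s - y) 0 * k y - (b * h y) * (b ^ 2 * h y) * k y| ≤ L2' * E y := by
        intro y hy
        have hyI : y ∈ Icc t₀ t₁ := ⟨le_trans hx.1 hy.1, le_trans hy.2 hm2⟩
        have hu : x + s - y ∈ Icc (-d) 0 := ⟨by linarith [hy.2], by linarith [hy.1, hs.2]⟩
        have hfac : B y 0 * C y (x + s - y) 0 * k y - (b * h y) * (b ^ 2 * h y) * k y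
            = (B y 0 * C y (x + s - y) 0 - (b * h y) * (b ^ 2 * h y)) * k y := by ring
        rw [hfac, abs_mul, abs_of_nonneg (hk0 y)]
        have hpd := aux_proddiff (B y 0) (C y (x + s - y) 0) (b * h y) (b ^ 2 * h y)
        have hsum : |B y 0 * C y (x + s - y) 0 - (b * h y) * (b ^ 2 * h y)|
            ≤ (M + b ^ 2 * M) * E y := by
          refine hpd.trans ?_
          have q1 : |B y 0| * |C y (x + s - y) 0 - b ^ 2 * h y| ≤ M * E y :=
            mul_le_mul (hMB y hyI 0 h0mem) (hE_C y hyI _ hu 0 h0mem) (abs_nonneg _) hMnn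
          have q2 : |b ^ 2 * h y| * |B y 0 - b * h y| ≤ (b ^ 2 * M) * E y :=
            mul_le_mul (hb2M y hyI) (hE_B y hyI 0 h0mem) (abs_nonneg _) (by positivity)
          have hq3 : M * E y + (b ^ 2 * M) * E y = (M + b ^ 2 * M) * E y := by ring
          linarith
        refine le_trans (mul_le_mul hsum (hk_le y) (hk0 y)
          (mul_nonneg (by positivity) (hE0 y hyI))) ?_
        rw [hL2'def]
        exact le_of_eq (by ring)
      have hbound2 := aux_intbound _ _ E x m t₁ L2' hm1 hm2 hfint hgint (hEint x hx)
        (fun y hy => hE0 y ⟨le_trans hx.1 hy.1, hy.2⟩) hL2'nn hpt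
      have hAm := est1 m hmI
      have hIm := hImono hx hmI hm1
      have hfin1 : |b| * |A m - h m| ≤ |b| * (L1 * ∫ y in x..t₁, E y) := by
        apply mul_le_mul_of_nonneg_left _ (abs_nonneg b)
        exact hAm.trans (mul_le_mul_of_nonneg_left hIm hL1)
      have := htri.trans (add_le_add hfin1 hbound2)
      rw [hL2def]
      linarith
    -- Estimate 3
    have est3 : ∀ x ∈ Icc t₀ t₁, ∀ s ∈ Icc (-d) 0, ∀ r ∈ Icc (-d) 0,
        |C x s r - b ^ 2 * h x| ≤ L3 * ∫ y in x..t₁, E y := by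
      intro x hx s hs r hr
      have e1 := (hsol x hx s hs r hr).2.2
      rw [← ht₁] at e1
      set m : ℝ := min t₁ (x + min s r + d) with hmdef
      have hminsr : -d ≤ min s r := le_min hs.1 hr.1
      have hmins : min s r ≤ s := min_le_left _ _
      have hminr : min s r ≤ r := min_le_right _ _
      have hm1 : x ≤ m := le_min hx.2 (by linarith)
      have hm2 : m ≤ t₁ := min_le_left _ _
      have hmI : m ∈ Icc t₀ t₁ := ⟨le_trans hx.1 hm1, hm2⟩
      have hmr : m ≤ x + min s r + d := min_le_right _ _
      have hsrmem : |s - r| - d ∈ Icc (-d) 0 := by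
        have habs : |s - r| ≤ d := abs_le.mpr ⟨by linarith [hs.1, hr.2], by linarith [hs.2, hr.1]⟩
        exact ⟨by linarith [abs_nonneg (s - r)], by linarith⟩
      have hconv : (∫ y in x..m, C y (x + s - y) 0 * C y 0 (x + r - y) / (σ ^ 2 * Q (y + d)))
          = ∫ y in x..m, C y (x + s - y) 0 * C y 0 (x + r - y) * k y := by
        apply intervalIntegral.integral_congr
        intro y hy
        rw [uIcc_of_le hm1] at hy
        dsimp only
        rw [← hQe_eq y (le_trans hx.1 hy.1) (le_trans hy.2 hm2), div_eq_mul_inv]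
      rw [hconv] at e1
      have e2 : b ^ 2 * h x
          = b * (b * h m) - ∫ y in x..m, (b ^ 2 * h y) * (b ^ 2 * h y) * k y := by
        have hc2 : (∫ y in x..m, (b ^ 2 * h y) * (b ^ 2 * h y) * k y)
            = ∫ y in x..m, b ^ 2 * (b ^ 2 * (h y) ^ 2 * k y) :=
          intervalIntegral.integral_congr (fun y hy => by
            show (b ^ 2 * h y) * (b ^ 2 * h y) * k y = b ^ 2 * (b ^ 2 * (h y) ^ 2 * k y); ring)
        rw [hc2, intervalIntegral.integral_const_mul, hint x m hm1 hm2]; ring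
      have hdiff : C x s r - b ^ 2 * h x
          = b * (B m (|s - r| - d) - b * h m)
            - ((∫ y in x..m, C y (x + s - y) 0 * C y 0 (x + r - y) * k y)
              - ∫ y in x..m, (b ^ 2 * h y) * (b ^ 2 * h y) * k y) := by
        rw [e1, e2]; ring
      have htri : |C x s r - b ^ 2 * h x| ≤ |b| * |B m (|s - r| - d) - b * h m|
          + |(∫ y in x..m, C y (x + s - y) 0 * C y 0 (x + r - y) * k y)
              - ∫ y in x..m, (b ^ 2 * h y) * (b ^ 2 * h y) * k y| := by
        rw [hdiff, sub_eq_add_neg]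
        refine (abs_add_le _ _).trans ?_
        rw [abs_neg, abs_mul]
      have hCcont1 : ContinuousOn (fun y => C y (x + s - y) 0) (Icc x m) := by
        have hmc : Continuous (fun y : ℝ => (y, x + s - y, (0:ℝ))) := by fun_prop
        apply hC.comp hmc.continuousOn
        intro y hy
        dsimp only
        refine ⟨⟨le_trans hx.1 hy.1, le_trans hy.2 hm2⟩, ⟨?_, ?_⟩, h0mem⟩
        · show -d ≤ x + s - y
          linarith [hy.2]
        · show x + s - y ≤ 0
          linarith [hy.1, hs.2]
      have hCcont2 : ContinuousOn (fun y => C y 0 (x + r - y)) (Icc x m) := by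
        have hmc : Continuous (fun y : ℝ => (y, (0:ℝ), x + r - y)) := by fun_prop
        apply hC.comp hmc.continuousOn
        intro y hy
        dsimp only
        refine ⟨⟨le_trans hx.1 hy.1, le_trans hy.2 hm2⟩, h0mem, ?_, ?_⟩
        · show -d ≤ x + r - y
          linarith [hy.2]
        · show x + r - y ≤ 0
          linarith [hy.1, hr.2]
      have hfint : IntervalIntegrable
          (fun y => C y (x + s - y) 0 * C y 0 (x + r - y) * k y) volume x m := by
        apply ContinuousOn.intervalIntegrable
        rw [uIcc_of_le hm1]
        exact (hCcont1.mul hCcont2).mul hk_cont.continuousOn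
      have hgint : IntervalIntegrable
          (fun y => (b ^ 2 * h y) * (b ^ 2 * h y) * k y) volume x m := by
        apply ContinuousOn.intervalIntegrable
        rw [uIcc_of_le hm1]
        have hhm : ContinuousOn h (Icc x m) := hcont.mono (Icc_subset_Icc hx.1 hm2)
        exact ((continuousOn_const.mul hhm).mul (continuousOn_const.mul hhm)).mul
          hk_cont.continuousOn
      have hpt : ∀ y ∈ Icc x m,
          |C y (x + s - y) 0 * C y 0 (x + r - y) * k y
            - (b ^ 2 * h y) * (b ^ 2 * h y) * k y| ≤ L2' * E y := by
        intro y hy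
        have hyI : y ∈ Icc t₀ t₁ := ⟨le_trans hx.1 hy.1, le_trans hy.2 hm2⟩
        have hu1 : x + s - y ∈ Icc (-d) 0 := ⟨by linarith [hy.2], by linarith [hy.1, hs.2]⟩
        have hu2 : x + r - y ∈ Icc (-d) 0 := ⟨by linarith [hy.2], by linarith [hy.1, hr.2]⟩
        have hfac : C y (x + s - y) 0 * C y 0 (x + r - y) * k y
              - (b ^ 2 * h y) * (b ^ 2 * h y) * k y
            = (C y (x + s - y) 0 * C y 0 (x + r - y)
              - (b ^ 2 * h y) * (b ^ 2 * h y)) * k y := by ring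
        rw [hfac, abs_mul, abs_of_nonneg (hk0 y)]
        have hpd := aux_proddiff (C y (x + s - y) 0) (C y 0 (x + r - y))
          (b ^ 2 * h y) (b ^ 2 * h y)
        have hsum : |C y (x + s - y) 0 * C y 0 (x + r - y) - (b ^ 2 * h y) * (b ^ 2 * h y)|
            ≤ (M + b ^ 2 * M) * E y := by
          refine hpd.trans ?_
          have q1 : |C y (x + s - y) 0| * |C y 0 (x + r - y) - b ^ 2 * h y| ≤ M * E y :=
            mul_le_mul (hMC y hyI _ hu1 0 h0mem) (hE_C y hyI 0 h0mem _ hu2) (abs_nonneg _) hMnn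
          have q2 : |b ^ 2 * h y| * |C y (x + s - y) 0 - b ^ 2 * h y| ≤ (b ^ 2 * M) * E y :=
            mul_le_mul (hb2M y hyI) (hE_C y hyI _ hu1 0 h0mem) (abs_nonneg _) (by positivity)
          have hq3 : M * E y + (b ^ 2 * M) * E y = (M + b ^ 2 * M) * E y := by ring
          linarith
        refine le_trans (mul_le_mul hsum (hk_le y) (hk0 y)
          (mul_nonneg (by positivity) (hE0 y hyI))) ?_
        rw [hL2'def]
        exact le_of_eq (by ring)
      have hbound2 := aux_intbound _ _ E x m t₁ L2' hm1 hm2 hfint hgint (hEint x hx)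
        (fun y hy => hE0 y ⟨le_trans hx.1 hy.1, hy.2⟩) hL2'nn hpt
      have hBm := est2 m hmI (|s - r| - d) hsrmem
      have hIm := hImono hx hmI hm1
      have hfin1 : |b| * |B m (|s - r| - d) - b * h m|
          ≤ |b| * (L2 * ∫ y in x..t₁, E y) := by
        apply mul_le_mul_of_nonneg_left _ (abs_nonneg b)
        exact hBm.trans (mul_le_mul_of_nonneg_left hIm hL2nn)
      have := htri.trans (add_le_add hfin1 hbound2)
      rw [hL3def]
      linarith
    -- Gronwall
    have hEgr : ∀ t ∈ Icc t₀ t₁, E t ≤ L * ∫ y in t..t₁, E y := by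
      intro t ht
      apply csSup_le ((hSne t ht.2).image e)
      rintro w ⟨p, hp, rfl⟩
      have hp1 : p.1 ∈ Icc t₀ t₁ := ⟨le_trans ht.1 hp.1.1, hp.1.2⟩
      have hIm : (∫ y in p.1..t₁, E y) ≤ ∫ y in t..t₁, E y := hImono ht hp1 hp.1.1
      have hI0 : 0 ≤ ∫ y in p.1..t₁, E y := hEnn p.1 hp1
      simp only [hedef]
      have b1 : |A p.1 - h p.1| ≤ L * ∫ y in t..t₁, E y :=
        (est1 p.1 hp1).trans (mul_le_mul (le_max_left _ _) hIm hI0 hL0)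
      have b2 : |B p.1 p.2.1 - b * h p.1| ≤ L * ∫ y in t..t₁, E y :=
        (est2 p.1 hp1 p.2.1 hp.2.1).trans
          (mul_le_mul ((le_max_left L2 L3).trans (le_max_right _ _)) hIm hI0 hL0)
      have b3 : |C p.1 p.2.1 p.2.2 - b ^ 2 * h p.1| ≤ L * ∫ y in t..t₁, E y :=
        (est3 p.1 hp1 p.2.1 hp.2.1 p.2.2 hp.2.2).trans
          (mul_le_mul ((le_max_right L2 L3).trans (le_max_right _ _)) hIm hI0 hL0)
      exact max_le b1 (max_le b2 b3)
    set δ : ℝ := 1 / (2 * (L + 1)) with hδdef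
    have hδpos : 0 < δ := by rw [hδdef]; positivity
    have hLδ : L * δ ≤ 1 / 2 := by
      rw [hδdef, mul_one_div, div_le_div_iff₀ (by positivity) (by norm_num : (0:ℝ) < 2)]
      linarith
    have hstep : ∀ N : ℕ, ∀ t ∈ Icc t₀ t₁, t₁ - t ≤ (N : ℝ) * δ → E t = 0 := by
      intro N
      induction N with
      | zero =>
        intro t ht h0
        push_cast at h0
        have hteq : t = t₁ := le_antisymm ht.2 (by linarith)
        rw [hteq] at ht ⊢
        have h1 := hEgr t₁ ht
        rw [intervalIntegral.integral_same, mul_zero] at h1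
        exact le_antisymm h1 (hE0 t₁ ht)
      | succ N ih =>
        intro t ht hN
        set t' : ℝ := min t₁ (t + δ) with ht'def
        have htt' : t ≤ t' := le_min ht.2 (by linarith)
        have ht'I : t' ∈ Icc t₀ t₁ := ⟨le_trans ht.1 htt', min_le_left _ _⟩
        have ht'δ : t' - t ≤ δ := by
          have := min_le_right t₁ (t + δ); linarith
        have hzero' : ∀ y ∈ Icc t' t₁, E y = 0 := by
          intro y hy
          apply ih y ⟨le_trans ht'I.1 hy.1, hy.2⟩
          have hcase : t₁ - t' ≤ (N : ℝ) * δ := by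
            rcases le_total t₁ (t + δ) with hc | hc
            · have hmin : t' = t₁ := by rw [ht'def, min_eq_left hc]
              have hNd : (0:ℝ) ≤ (N : ℝ) * δ := by positivity
              rw [hmin]; linarith
            · have hmin : t' = t + δ := by rw [ht'def, min_eq_right hc]
              push_cast at hN
              rw [hmin]; linarith
          linarith [hy.1]
        have i1 : IntervalIntegrable E volume t t' :=
          (hEint t ht).mono_set
            (by rw [uIcc_of_le htt', uIcc_of_le ht.2]; exact Icc_subset_Icc le_rfl ht'I.2)
        have hsplit := intervalIntegral.integral_add_adjacent_intervals i1 (hEint t' ht'I)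
        have hz2 : (∫ y in t'..t₁, E y) = 0 := by
          rw [show (∫ y in t'..t₁, E y) = ∫ _y in t'..t₁, (0:ℝ) from
            intervalIntegral.integral_congr
              (fun y hy => hzero' y (by rwa [uIcc_of_le ht'I.2] at hy))]
          simp
        have h1 : (∫ y in t..t', E y) ≤ (t' - t) * E t := by
          have hmono := intervalIntegral.integral_mono_on htt' i1 intervalIntegrable_const
            (fun y hy => hE_anti ht ⟨le_trans ht.1 hy.1, le_trans hy.2 ht'I.2⟩ hy.1)
          rwa [intervalIntegral.integral_const, smul_eq_mul] at hmono
        have hEt := hEgr t ht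
        have hE0t := hE0 t ht
        have h2 : E t ≤ L * ((t' - t) * E t) := by
          rw [← hsplit, hz2, add_zero] at hEt
          exact hEt.trans (mul_le_mul_of_nonneg_left h1 hL0)
        have h3 : L * ((t' - t) * E t) ≤ (L * δ) * E t := by
          have hq : (t' - t) * E t ≤ δ * E t := mul_le_mul_of_nonneg_right ht'δ hE0t
          calc L * ((t' - t) * E t) ≤ L * (δ * E t) := mul_le_mul_of_nonneg_left hq hL0
            _ = (L * δ) * E t := by ring
        have h4 : (L * δ) * E t ≤ (1/2) * E t := mul_le_mul_of_nonneg_right hLδ hE0t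
        linarith
    have hallzero : ∀ t ∈ Icc t₀ t₁, E t = 0 := by
      obtain ⟨N, hNge⟩ := exists_nat_ge ((t₁ - t₀) / δ)
      intro t ht
      apply hstep N t ht
      rw [div_le_iff₀ hδpos] at hNge
      linarith [ht.1]
    refine ⟨?_, ?_, ?_⟩
    · intro t ht
      have h1 := hE_A t ht
      rw [hallzero t ht] at h1
      have h3 : A t - h t = 0 := abs_eq_zero.mp (le_antisymm h1 (abs_nonneg _))
      linarith
    · intro t ht s hs
      show B t s = b * h t
      have h1 := hE_B t ht s hs
      rw [hallzero t ht] at h1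
      have h3 : B t s - b * h t = 0 := abs_eq_zero.mp (le_antisymm h1 (abs_nonneg _))
      linarith
    · intro t ht s hs r hr
      show C t s r = b ^ 2 * h t
      have h1 := hE_C t ht s hs r hr
      rw [hallzero t ht] at h1
      have h3 : C t s r - b ^ 2 * h t = 0 := abs_eq_zero.mp (le_antisymm h1 (abs_nonneg _))
      linarith
end
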